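/- arXiv:1906.09570 — 8 statements merged into one kernel-verified Lean document; each statement's English description precedes it below -/
import Mathlib

section
/- Define à_n = A_n C_{n-1} - A_{n-1} C_n. Then à_n satisfies the recurrence à_n = -b_n Ã_{n-1} - a_{n-1} Ã_{n-2} + Ã_{n-3} for n ≥ 2, with initial values Ã_{-1} = 0, Ã_0 = -1, Ã_1 = b_1. -/
/-- `Ã_n = A_n C_{n-1} - A_{n-1} C_n` satisfies
`Ã_n = -b_n Ã_{n-1} - a_{n-1} Ã_{n-2} + Ã_{n-3}` for `n ≥ 2`, with
`Ã_{-1} = 0`, `Ã_0 = -1`, `Ã_1 = b_1`. Indexing: `A (n+2)` is the paper's `A_n`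
and `tA (n+1)` is the paper's `Ã_n`. -/
theorem mcf_tilde_A_recurrence (R : Type*) [CommRing R] (a b A C tA : ℕ → R)
    (hA0 : A 0 = 0) (hA1 : A 1 = 1) (hA2 : A 2 = a 0)
    (hC0 : C 0 = 0) (hC1 : C 1 = 0) (hC2 : C 2 = 1)
    (hA : ∀ n, A (n + 3) = a (n + 1) * A (n + 2) + b (n + 1) * A (n + 1) + A n)
    (hC : ∀ n, C (n + 3) = a (n + 1) * C (n + 2) + b (n + 1) * C (n + 1) + C n)
    (htA : ∀ n, tA n = A (n + 1) * C n - A n * C (n + 1)) :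
    tA 0 = 0 ∧ tA 1 = -1 ∧ tA 2 = b 1 ∧
      ∀ n, tA (n + 3) = -b (n + 2) * tA (n + 2) - a (n + 1) * tA (n + 1) + tA n := by
  refine ⟨?_, ?_, ?_, ?_⟩
  · rw [htA 0, hA0, hA1, hC0, hC1]; ring
  · rw [htA 1, hA1, hA2, hC1, hC2]; ring
  · have h3A := hA 0; have h3C := hC 0
    norm_num at h3A h3C
    rw [htA 2, show (2:ℕ)+1 = 3 from rfl, h3A, h3C, hA0, hA1, hA2, hC0, hC1, hC2]; ring
  · intro n
    rw [htA (n + 3), htA (n + 2), htA (n + 1), htA n]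
    have h4A := hA (n + 1); have h4C := hC (n + 1)
    have h3A := hA n; have h3C := hC n
    rw [show n + 1 + 3 = n + 4 by ring, show n + 1 + 2 = n + 3 by ring,
      show n + 1 + 1 = n + 2 by ring] at h4A h4C
    rw [show n + 3 + 1 = n + 4 by ring, show n + 2 + 1 = n + 3 by ring,
      show n + 1 + 1 = n + 2 by ring, h4A, h4C, h3A, h3C]
    ring
end

section
/- Let [(a_0, a_1, …), (b_0, b_1, …)] be the p-adic MCF expansion of (α, β) ∈ ℚ_p². Then for all n, ν_p(α - A_n/C_n) ≥ K_n + ⌊(n+2)/2⌋ and ν_p(β - B_n/C_n) ≥ K_n + ⌊(n+3)/2⌋, where K_n = -ν_p(C_n). -/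
/-- The Browkin `s`-function on `ℚ_p`: sends `α` to the truncation of its
`p`-adic expansion (digits in `(-p/2, p/2)`) to non-positive powers of `p`.
It is characterized by: `s α ∈ ℤ[1/p]`, `|s α|_∞ < p/2`, and `|α - s α|_p < 1`. -/
structure BrowkinS (p : ℕ) [Fact (Nat.Prime p)] where
  s : ℚ_[p] → ℚ
  s_int : ∀ x, ∃ (z : ℤ) (k : ℕ), s x = (z : ℚ) / (p : ℚ) ^ k
  s_bound : ∀ x, |s x| < (p : ℚ) / 2
  s_close : ∀ x, ‖x - (s x : ℚ_[p])‖ < 1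

/-- An infinite `p`-adic multidimensional continued fraction (dimension 2),
produced by the `p`-adic Jacobi–Perron algorithm: `al 0 = α`, `be 0 = β`,
`a_n = s(α_n)`, `b_n = s(β_n)`, `α_{n+1} = 1/(β_n - b_n)`,
`β_{n+1} = (α_n - a_n)/(β_n - b_n)`, and the algorithm never stops. -/
structure PMCF (p : ℕ) [Fact (Nat.Prime p)] where
  s : ℚ_[p] → ℚ
  s_int : ∀ x, ∃ (z : ℤ) (k : ℕ), s x = (z : ℚ) / (p : ℚ) ^ k
  s_bound : ∀ x, |s x| < (p : ℚ) / 2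
  s_close : ∀ x, ‖x - (s x : ℚ_[p])‖ < 1
  al : ℕ → ℚ_[p]
  be : ℕ → ℚ_[p]
  ne : ∀ n, be n - (s (be n) : ℚ_[p]) ≠ 0
  ral : ∀ n, al (n + 1) = (be n - (s (be n) : ℚ_[p]))⁻¹
  rbe : ∀ n, be (n + 1) = (al n - (s (al n) : ℚ_[p])) * (be n - (s (be n) : ℚ_[p]))⁻¹

namespace PMCF

variable {p : ℕ} [Fact (Nat.Prime p)]

/-- Partial quotients `a_n = s(α_n)`. -/
def a (m : PMCF p) (n : ℕ) : ℚ := m.s (m.al n)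

/-- Partial quotients `b_n = s(β_n)`. -/
def b (m : PMCF p) (n : ℕ) : ℚ := m.s (m.be n)

/-- Numerators `A`: indices shifted by `2`, so `A (n+2)` is the paper's `A_n`
(`A_{-2} = 0`, `A_{-1} = 1`, `A_0 = a_0`). -/
def A (m : PMCF p) : ℕ → ℚ
  | 0 => 0
  | 1 => 1
  | 2 => a m 0
  | n + 3 => a m (n + 1) * A m (n + 2) + b m (n + 1) * A m (n + 1) + A m n

/-- Numerators `B` (shifted by `2`): `B_{-2} = 1`, `B_{-1} = 0`, `B_0 = b_0`. -/
def B (m : PMCF p) : ℕ → ℚ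
  | 0 => 1
  | 1 => 0
  | 2 => b m 0
  | n + 3 => a m (n + 1) * B m (n + 2) + b m (n + 1) * B m (n + 1) + B m n

/-- Denominators `C` (shifted by `2`): `C_{-2} = 0`, `C_{-1} = 0`, `C_0 = 1`. -/
def C (m : PMCF p) : ℕ → ℚ
  | 0 => 0
  | 1 => 0
  | 2 => 1
  | n + 3 => a m (n + 1) * C m (n + 2) + b m (n + 1) * C m (n + 1) + C m n

/-- `K_n = k_1 + ⋯ + k_n` where `k_i = ν_p(1/a_i)`. -/
def K (m : PMCF p) (n : ℕ) : ℤ := -∑ i ∈ Finset.Icc 1 n, padicValRat p (a m i)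

/-- `k_n = ν_p(1/a_n)`. -/
def kk (m : PMCF p) (n : ℕ) : ℤ := -padicValRat p (a m n)

/-- `V_n^α = C_n α - A_n` (paper indexing). -/
noncomputable def Va (m : PMCF p) (n : ℕ) : ℚ_[p] :=
  ((C m (n + 2) : ℚ) : ℚ_[p]) * m.al 0 - ((A m (n + 2) : ℚ) : ℚ_[p])

/-- `V_n^β = C_n β - B_n` (paper indexing). -/
noncomputable def Vb (m : PMCF p) (n : ℕ) : ℚ_[p] :=
  ((C m (n + 2) : ℚ) : ℚ_[p]) * m.be 0 - ((B m (n + 2) : ℚ) : ℚ_[p])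

end PMCF


namespace PMCFAux

variable {p : ℕ} [Fact (Nat.Prime p)]

noncomputable def eps (m : PMCF p) (n : ℕ) : ℚ_[p] := m.al n - ((m.s (m.al n) : ℚ) : ℚ_[p])
noncomputable def del (m : PMCF p) (n : ℕ) : ℚ_[p] := m.be n - ((m.s (m.be n) : ℚ) : ℚ_[p])

lemma p_pos : (0:ℝ) < p := by exact_mod_cast (Fact.out : Nat.Prime p).pos
lemma one_lt_p : (1:ℝ) < p := by exact_mod_cast (Fact.out : Nat.Prime p).one_lt

lemma del_ne (m : PMCF p) (n : ℕ) : del m n ≠ 0 := m.ne n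

lemma norm_del_le (m : PMCF p) (n : ℕ) : ‖del m n‖ ≤ (p:ℝ)⁻¹ := by
  have h := (Padic.norm_le_pow_iff_norm_lt_pow_add_one (del m n) (-1)).mpr
  simp only [neg_add_cancel, zpow_zero, zpow_neg_one] at h
  exact h (m.s_close (m.be n))

lemma norm_eps_le (m : PMCF p) (n : ℕ) : ‖eps m n‖ ≤ (p:ℝ)⁻¹ := by
  have h := (Padic.norm_le_pow_iff_norm_lt_pow_add_one (eps m n) (-1)).mpr
  simp only [neg_add_cancel, zpow_zero, zpow_neg_one] at h
  exact h (m.s_close (m.al n))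

lemma norm_del_pos (m : PMCF p) (n : ℕ) : 0 < ‖del m n‖ :=
  norm_pos_iff.mpr (del_ne m n)

lemma norm_al (m : PMCF p) (n : ℕ) : ‖m.al (n+1)‖ = ‖del m n‖⁻¹ := by
  rw [m.ral n, norm_inv]; rfl

lemma p_le_norm_al (m : PMCF p) (n : ℕ) : (p:ℝ) ≤ ‖m.al (n+1)‖ := by
  rw [norm_al]
  have h := inv_anti₀ (norm_del_pos m n) (norm_del_le m n)
  rwa [inv_inv] at h

lemma norm_a (m : PMCF p) (n : ℕ) :
    ‖((PMCF.a m (n+1) : ℚ) : ℚ_[p])‖ = ‖m.al (n+1)‖ := by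
  have hd : ‖((PMCF.a m (n+1) : ℚ) : ℚ_[p]) - m.al (n+1)‖ < 1 := by
    rw [norm_sub_rev]; exact m.s_close (m.al (n+1))
  have hal := p_le_norm_al m n
  have hne : ‖m.al (n+1)‖ ≠ ‖((PMCF.a m (n+1) : ℚ) : ℚ_[p]) - m.al (n+1)‖ := by
    have := one_lt_p (p := p); intro h; rw [← h] at hd; linarith
  calc ‖((PMCF.a m (n+1) : ℚ) : ℚ_[p])‖
      = ‖m.al (n+1) + (((PMCF.a m (n+1) : ℚ) : ℚ_[p]) - m.al (n+1))‖ := by ring_nf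
    _ = max ‖m.al (n+1)‖ ‖((PMCF.a m (n+1) : ℚ) : ℚ_[p]) - m.al (n+1)‖ :=
        Padic.add_eq_max_of_ne hne
    _ = ‖m.al (n+1)‖ := by
        apply max_eq_left; have := one_lt_p (p := p); linarith

lemma p_le_norm_a (m : PMCF p) (n : ℕ) : (p:ℝ) ≤ ‖((PMCF.a m (n+1) : ℚ) : ℚ_[p])‖ := by
  rw [norm_a]; exact p_le_norm_al m n

lemma a_ne (m : PMCF p) (n : ℕ) : PMCF.a m (n+1) ≠ 0 := by
  intro h
  have := p_le_norm_a m n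
  rw [h] at this; simp at this
  exact absurd this (Fact.out : Nat.Prime p).pos.ne'

lemma norm_b_le (m : PMCF p) (n : ℕ) :
    ‖((PMCF.b m (n+1) : ℚ) : ℚ_[p])‖ ≤ (p:ℝ)⁻¹ * ‖((PMCF.a m (n+1) : ℚ) : ℚ_[p])‖ := by
  have hp1 := one_lt_p (p := p)
  have hp0 := p_pos (p := p)
  have hbe : ‖m.be (n+1)‖ ≤ (p:ℝ)⁻¹ * ‖((PMCF.a m (n+1) : ℚ) : ℚ_[p])‖ := by
    rw [m.rbe n, norm_mul, norm_inv]
    have h1 : ‖m.al n - ((m.s (m.al n) : ℚ) : ℚ_[p])‖ ≤ (p:ℝ)⁻¹ := norm_eps_le m n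
    have h2 : ‖m.be n - ((m.s (m.be n) : ℚ) : ℚ_[p])‖⁻¹ = ‖((PMCF.a m (n+1) : ℚ) : ℚ_[p])‖ := by
      rw [norm_a m n, norm_al m n]; rfl
    rw [h2]
    have : (0:ℝ) ≤ ‖((PMCF.a m (n+1) : ℚ) : ℚ_[p])‖ := norm_nonneg _
    exact mul_le_mul_of_nonneg_right h1 this
  have hdiff : ‖m.be (n+1) - ((PMCF.b m (n+1) : ℚ) : ℚ_[p])‖ ≤ (p:ℝ)⁻¹ := norm_del_le m (n+1)
  have hkey : ((PMCF.b m (n+1) : ℚ) : ℚ_[p])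
      = m.be (n+1) + (((PMCF.b m (n+1) : ℚ) : ℚ_[p]) - m.be (n+1)) := by ring
  have ha1 : (1:ℝ) ≤ ‖((PMCF.a m (n+1) : ℚ) : ℚ_[p])‖ := le_trans (by linarith) (p_le_norm_a m n)
  calc ‖((PMCF.b m (n+1) : ℚ) : ℚ_[p])‖
      = ‖m.be (n+1) + (((PMCF.b m (n+1) : ℚ) : ℚ_[p]) - m.be (n+1))‖ := by ring_nf
    _ ≤ max ‖m.be (n+1)‖ ‖((PMCF.b m (n+1) : ℚ) : ℚ_[p]) - m.be (n+1)‖ :=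
        Padic.nonarchimedean _ _
    _ ≤ (p:ℝ)⁻¹ * ‖((PMCF.a m (n+1) : ℚ) : ℚ_[p])‖ := by
        apply max_le hbe
        rw [norm_sub_rev]
        calc ‖m.be (n+1) - ((PMCF.b m (n+1) : ℚ) : ℚ_[p])‖ ≤ (p:ℝ)⁻¹ := hdiff
          _ = (p:ℝ)⁻¹ * 1 := by ring
          _ ≤ (p:ℝ)⁻¹ * ‖((PMCF.a m (n+1) : ℚ) : ℚ_[p])‖ := by
              apply mul_le_mul_of_nonneg_left ha1; positivity


lemma U_rec (m : PMCF p) (U : ℕ → ℚ_[p])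
    (hU : ∀ n, U (n+3) = ((PMCF.a m (n+1) : ℚ) : ℚ_[p]) * U (n+2)
        + ((PMCF.b m (n+1) : ℚ) : ℚ_[p]) * U (n+1) + U n)
    (h0 : U 2 = -eps m 0 * U 1 - del m 0 * U 0) :
    ∀ n, U (n+2) = -eps m n * U (n+1) - del m n * U n := by
  intro n
  induction n with
  | zero => exact h0
  | succ k ih =>
    have hd := del_ne m k
    have hUk : U k = (-U (k+2) - eps m k * U (k+1)) / del m k := by
      rw [ih]; field_simp; ring
    have he : eps m (k+1) = (del m k)⁻¹ - ((PMCF.a m (k+1) : ℚ) : ℚ_[p]) := by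
      show m.al (k+1) - ((PMCF.a m (k+1) : ℚ) : ℚ_[p]) = _
      rw [show m.al (k+1) = (del m k)⁻¹ from m.ral k]
    have hde : del m (k+1) = eps m k * (del m k)⁻¹ - ((PMCF.b m (k+1) : ℚ) : ℚ_[p]) := by
      show m.be (k+1) - ((PMCF.b m (k+1) : ℚ) : ℚ_[p]) = _
      rw [show m.be (k+1) = eps m k * (del m k)⁻¹ from m.rbe k]
    rw [hU k, hUk, he, hde]
    field_simp
    ring

lemma U_norm (m : PMCF p) (U : ℕ → ℚ_[p])
    (hrec : ∀ n, U (n+2) = -eps m n * U (n+1) - del m n * U n) (c : ℕ)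
    (h0 : ‖U 0‖ ≤ (p:ℝ) ^ (-(((0+c)/2 : ℕ) : ℤ)))
    (h1 : ‖U 1‖ ≤ (p:ℝ) ^ (-(((1+c)/2 : ℕ) : ℤ))) :
    ∀ n, ‖U n‖ ≤ (p:ℝ) ^ (-(((n+c)/2 : ℕ) : ℤ)) := by
  have hp0 := p_pos (p := p)
  have hp1 := one_lt_p (p := p)
  suffices H : ∀ n, ‖U n‖ ≤ (p:ℝ) ^ (-(((n+c)/2 : ℕ) : ℤ))
      ∧ ‖U (n+1)‖ ≤ (p:ℝ) ^ (-(((n+1+c)/2 : ℕ) : ℤ)) from fun n => (H n).1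
  intro n
  induction n with
  | zero => exact ⟨h0, h1⟩
  | succ k ih =>
    obtain ⟨ihk, ihk1⟩ := ih
    refine ⟨ihk1, ?_⟩
    have hmono : (p:ℝ) ^ (-(((k+1+c)/2 : ℕ) : ℤ)) ≤ (p:ℝ) ^ (-(((k+c)/2 : ℕ) : ℤ)) := by
      apply zpow_le_zpow_right₀ (le_of_lt hp1)
      have : ((k+c)/2 : ℕ) ≤ ((k+1+c)/2 : ℕ) := Nat.div_le_div_right (by omega)
      omega
    have hexp : (((k+2+c)/2 : ℕ) : ℤ) = (((k+c)/2 : ℕ) : ℤ) + 1 := by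
      have : ((k+2+c)/2 : ℕ) = ((k+c)/2 : ℕ) + 1 := by omega
      omega
    have key : ∀ x : ℚ_[p], ‖x‖ ≤ (p:ℝ)⁻¹ → ∀ j, ‖U j‖ ≤ (p:ℝ) ^ (-(((k+c)/2 : ℕ) : ℤ)) →
        ‖x * U j‖ ≤ (p:ℝ) ^ (-(((k+2+c)/2 : ℕ) : ℤ)) := by
      intro x hx j hUj
      rw [norm_mul, hexp]
      calc ‖x‖ * ‖U j‖ ≤ (p:ℝ)⁻¹ * (p:ℝ) ^ (-(((k+c)/2 : ℕ) : ℤ)) :=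
            mul_le_mul hx hUj (norm_nonneg _) (by positivity)
        _ = (p:ℝ) ^ (-((((k+c)/2 : ℕ) : ℤ) + 1)) := by
            rw [neg_add, zpow_add₀ (ne_of_gt hp0), zpow_neg_one, mul_comm]
    have h2 : ‖U (k+2)‖ ≤ (p:ℝ) ^ (-(((k+2+c)/2 : ℕ) : ℤ)) := by
      rw [hrec k]
      have : -eps m k * U (k+1) - del m k * U k
          = (-(eps m k * U (k+1))) + (-(del m k * U k)) := by ring
      rw [this]
      apply le_trans (Padic.nonarchimedean _ _)
      apply max_le
      · rw [norm_neg]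
        exact key _ (norm_eps_le m k) _ (le_trans ihk1 hmono)
      · rw [norm_neg]
        exact key _ (norm_del_le m k) _ ihk
    exact h2

lemma prod_zpow' (x : ℝ) (hx : x ≠ 0) (s : Finset ℕ) (f : ℕ → ℤ) :
    ∏ i ∈ s, x ^ f i = x ^ (∑ i ∈ s, f i) := by
  classical
  induction s using Finset.induction with
  | empty => simp
  | insert _ _ h ih => rw [Finset.prod_insert h, Finset.sum_insert h, zpow_add₀ hx, ih]

noncomputable def W (m : PMCF p) (n : ℕ) : ℝ :=
  ∏ i ∈ Finset.Icc 1 n, ‖((PMCF.a m i : ℚ) : ℚ_[p])‖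

lemma W_pos (m : PMCF p) (n : ℕ) : 0 < W m n := by
  apply Finset.prod_pos
  intro i hi
  rw [Finset.mem_Icc] at hi
  obtain ⟨j, rfl⟩ : ∃ j, i = j + 1 := ⟨i - 1, by omega⟩
  exact lt_of_lt_of_le (p_pos (p := p)) (p_le_norm_a m j)

lemma normC (m : PMCF p) : ∀ n,
    ‖((PMCF.C m (n+2) : ℚ) : ℚ_[p])‖ = W m n ∧
    ‖((PMCF.C m (n+1) : ℚ) : ℚ_[p])‖ ≤ (p:ℝ)⁻¹ * W m n ∧
    ‖((PMCF.C m n : ℚ) : ℚ_[p])‖ ≤ (p:ℝ)⁻¹ * ((p:ℝ)⁻¹ * W m n) := by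
  have hp0 := p_pos (p := p)
  have hp1 := one_lt_p (p := p)
  intro n
  induction n with
  | zero =>
    refine ⟨by simp [PMCF.C, W], ?_, ?_⟩ <;> simp [PMCF.C, W] <;> positivity
  | succ n ih =>
    obtain ⟨hC2, hC1, hC0⟩ := ih
    have hW : W m (n+1) = W m n * ‖((PMCF.a m (n+1) : ℚ) : ℚ_[p])‖ :=
      Finset.prod_Icc_succ_top (by omega) _
    set na := ‖((PMCF.a m (n+1) : ℚ) : ℚ_[p])‖ with hna
    have hpa : (p:ℝ) ≤ na := p_le_norm_a m n
    have hWpos := W_pos m n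
    have hinv : (0:ℝ) < (p:ℝ)⁻¹ := by positivity
    have h1a : (1:ℝ) ≤ (p:ℝ)⁻¹ * na := by
      rw [← inv_mul_cancel₀ (ne_of_gt hp0)]
      exact mul_le_mul_of_nonneg_left hpa (le_of_lt hinv)
    have hcast : ((PMCF.C m (n+3) : ℚ) : ℚ_[p])
        = ((PMCF.a m (n+1) : ℚ) : ℚ_[p]) * ((PMCF.C m (n+2) : ℚ) : ℚ_[p])
          + (((PMCF.b m (n+1) : ℚ) : ℚ_[p]) * ((PMCF.C m (n+1) : ℚ) : ℚ_[p])
            + ((PMCF.C m n : ℚ) : ℚ_[p])) := by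
      have : PMCF.C m (n+3) = PMCF.a m (n+1) * PMCF.C m (n+2)
          + PMCF.b m (n+1) * PMCF.C m (n+1) + PMCF.C m n := rfl
      rw [this]; push_cast; ring
    have hX : ‖((PMCF.a m (n+1) : ℚ) : ℚ_[p]) * ((PMCF.C m (n+2) : ℚ) : ℚ_[p])‖
        = W m (n+1) := by
      rw [norm_mul, hC2, hW]; ring
    have hY : ‖((PMCF.b m (n+1) : ℚ) : ℚ_[p]) * ((PMCF.C m (n+1) : ℚ) : ℚ_[p])
        + ((PMCF.C m n : ℚ) : ℚ_[p])‖ ≤ (p:ℝ)⁻¹ * ((p:ℝ)⁻¹ * W m (n+1)) := by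
      apply le_trans (Padic.nonarchimedean _ _)
      apply max_le
      · rw [norm_mul]
        calc ‖((PMCF.b m (n+1) : ℚ) : ℚ_[p])‖ * ‖((PMCF.C m (n+1) : ℚ) : ℚ_[p])‖
            ≤ ((p:ℝ)⁻¹ * na) * ((p:ℝ)⁻¹ * W m n) :=
              mul_le_mul (norm_b_le m n) hC1 (norm_nonneg _) (by positivity)
          _ = (p:ℝ)⁻¹ * ((p:ℝ)⁻¹ * W m (n+1)) := by rw [hW]; ring
      · calc ‖((PMCF.C m n : ℚ) : ℚ_[p])‖ ≤ (p:ℝ)⁻¹ * ((p:ℝ)⁻¹ * W m n) := hC0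
          _ ≤ (p:ℝ)⁻¹ * ((p:ℝ)⁻¹ * W m (n+1)) := by
            rw [hW]
            have h2' : W m n * 1 ≤ W m n * na := by
              apply mul_le_mul_of_nonneg_left _ (le_of_lt hWpos)
              linarith
            have h3' := mul_le_mul_of_nonneg_left h2' (le_of_lt (mul_pos hinv hinv))
            nlinarith [h3']
    have hYlt : ‖((PMCF.b m (n+1) : ℚ) : ℚ_[p]) * ((PMCF.C m (n+1) : ℚ) : ℚ_[p])
        + ((PMCF.C m n : ℚ) : ℚ_[p])‖ < W m (n+1) := by
      apply lt_of_le_of_lt hY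
      have hW1pos : 0 < W m (n+1) := W_pos m (n+1)
      have hinvlt : (p:ℝ)⁻¹ < 1 := by
        rw [inv_lt_one_iff₀]; right; exact hp1
      have h3' := mul_lt_mul_of_pos_right hinvlt (mul_pos hinv hW1pos)
      have h4' := mul_lt_mul_of_pos_right hinvlt hW1pos
      nlinarith [h3', h4']
    have hmain : ‖((PMCF.C m (n+3) : ℚ) : ℚ_[p])‖ = W m (n+1) := by
      rw [hcast, Padic.add_eq_max_of_ne (by rw [hX]; exact ne_of_gt hYlt)]
      rw [hX]
      exact max_eq_left (le_of_lt hYlt)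
    refine ⟨hmain, ?_, ?_⟩
    · rw [hC2, hW]
      have : W m n * 1 ≤ W m n * ((p:ℝ)⁻¹ * na) := by
        apply mul_le_mul_of_nonneg_left h1a (le_of_lt hWpos)
      nlinarith
    · calc ‖((PMCF.C m (n+1) : ℚ) : ℚ_[p])‖ ≤ (p:ℝ)⁻¹ * W m n := hC1
        _ ≤ (p:ℝ)⁻¹ * ((p:ℝ)⁻¹ * W m (n+1)) := by
          rw [hW]
          have : W m n * 1 ≤ W m n * ((p:ℝ)⁻¹ * na) := by
            apply mul_le_mul_of_nonneg_left h1a (le_of_lt hWpos)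
          nlinarith

lemma W_eq (m : PMCF p) (n : ℕ) : W m n = (p:ℝ) ^ (PMCF.K m n) := by
  have hp0 := p_pos (p := p)
  have h : ∀ i ∈ Finset.Icc 1 n, ‖((PMCF.a m i : ℚ) : ℚ_[p])‖
      = (p:ℝ) ^ (-padicValRat p (PMCF.a m i)) := by
    intro i hi
    rw [Finset.mem_Icc] at hi
    obtain ⟨j, rfl⟩ : ∃ j, i = j + 1 := ⟨i - 1, by omega⟩
    rw [Padic.eq_padicNorm, padicNorm.eq_zpow_of_nonzero (a_ne m j)]
    push_cast
    ring
  rw [W, Finset.prod_congr rfl h, prod_zpow' _ (ne_of_gt hp0)]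
  congr 1
  rw [PMCF.K, ← Finset.sum_neg_distrib]

end PMCFAux

/-- Rate of convergence: `ν_p(α - A_n/C_n) ≥ K_n + ⌊(n+2)/2⌋` and
`ν_p(β - B_n/C_n) ≥ K_n + ⌊(n+3)/2⌋` (stated via the `p`-adic norm). -/
theorem pmcf_rate_of_convergence (p : ℕ) [Fact (Nat.Prime p)] (hp : Odd p)
    (m : PMCF p) (n : ℕ) :
    ‖m.al 0 - ((PMCF.A m (n + 2) : ℚ) : ℚ_[p]) / ((PMCF.C m (n + 2) : ℚ) : ℚ_[p])‖ ≤
        (p : ℝ) ^ (-(PMCF.K m n + (((n + 2) / 2 : ℕ) : ℤ))) ∧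
      ‖m.be 0 - ((PMCF.B m (n + 2) : ℚ) : ℚ_[p]) / ((PMCF.C m (n + 2) : ℚ) : ℚ_[p])‖ ≤
        (p : ℝ) ^ (-(PMCF.K m n + (((n + 3) / 2 : ℕ) : ℤ))) := by
  
  have hp0 := PMCFAux.p_pos (p := p)
  obtain ⟨hC2, -, -⟩ := PMCFAux.normC m n
  have hCpos : 0 < ‖((PMCF.C m (n+2) : ℚ) : ℚ_[p])‖ := hC2 ▸ PMCFAux.W_pos m n
  have hCne : ((PMCF.C m (n+2) : ℚ) : ℚ_[p]) ≠ 0 := norm_pos_iff.mp hCpos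
  constructor
  · set U : ℕ → ℚ_[p] :=
      fun j => ((PMCF.C m j : ℚ) : ℚ_[p]) * m.al 0 - ((PMCF.A m j : ℚ) : ℚ_[p]) with hUdef
    have hU : ∀ k, U (k+3) = ((PMCF.a m (k+1) : ℚ) : ℚ_[p]) * U (k+2)
        + ((PMCF.b m (k+1) : ℚ) : ℚ_[p]) * U (k+1) + U k := by
      intro k
      simp only [hUdef]
      have h1 : PMCF.C m (k+3) = PMCF.a m (k+1) * PMCF.C m (k+2)
          + PMCF.b m (k+1) * PMCF.C m (k+1) + PMCF.C m k := rfl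
      have h2 : PMCF.A m (k+3) = PMCF.a m (k+1) * PMCF.A m (k+2)
          + PMCF.b m (k+1) * PMCF.A m (k+1) + PMCF.A m k := rfl
      rw [h1, h2]; push_cast; ring
    have h0 : U 2 = -PMCFAux.eps m 0 * U 1 - PMCFAux.del m 0 * U 0 := by
      simp only [hUdef]
      have h1 : PMCF.C m 2 = 1 := rfl
      have h2 : PMCF.C m 1 = 0 := rfl
      have h3 : PMCF.C m 0 = 0 := rfl
      have h4 : PMCF.A m 2 = PMCF.a m 0 := rfl
      have h5 : PMCF.A m 1 = 1 := rfl
      have h6 : PMCF.A m 0 = 0 := rfl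
      have h7 : PMCFAux.eps m 0 = m.al 0 - ((PMCF.a m 0 : ℚ) : ℚ_[p]) := rfl
      rw [h1, h2, h3, h4, h5, h6, h7]
      push_cast
      ring
    have hbound := PMCFAux.U_norm m U (PMCFAux.U_rec m U hU h0) 0
      (by
        have h3 : PMCF.C m 0 = 0 := rfl
        have h6 : PMCF.A m 0 = 0 := rfl
        simp [hUdef, h3, h6])
      (by
        have h2 : PMCF.C m 1 = 0 := rfl
        have h5 : PMCF.A m 1 = 1 := rfl
        simp [hUdef, h2, h5]) (n+2)
    have key : m.al 0 - ((PMCF.A m (n+2) : ℚ) : ℚ_[p]) / ((PMCF.C m (n+2) : ℚ) : ℚ_[p])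
        = U (n+2) / ((PMCF.C m (n+2) : ℚ) : ℚ_[p]) := by
      simp only [hUdef]; field_simp
    rw [key, norm_div, hC2, PMCFAux.W_eq]
    rw [div_le_iff₀ (zpow_pos hp0 _), ← zpow_add₀ (ne_of_gt hp0)]
    have hexp : -(PMCF.K m n + (((n+2)/2 : ℕ) : ℤ)) + PMCF.K m n
        = -(((n+2+0)/2 : ℕ) : ℤ) := by
      have : ((n+2+0)/2 : ℕ) = ((n+2)/2 : ℕ) := by omega
      rw [this]; ring
    rw [hexp]
    exact hbound
  · set U : ℕ → ℚ_[p] :=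
      fun j => ((PMCF.C m j : ℚ) : ℚ_[p]) * m.be 0 - ((PMCF.B m j : ℚ) : ℚ_[p]) with hUdef
    have hU : ∀ k, U (k+3) = ((PMCF.a m (k+1) : ℚ) : ℚ_[p]) * U (k+2)
        + ((PMCF.b m (k+1) : ℚ) : ℚ_[p]) * U (k+1) + U k := by
      intro k
      simp only [hUdef]
      have h1 : PMCF.C m (k+3) = PMCF.a m (k+1) * PMCF.C m (k+2)
          + PMCF.b m (k+1) * PMCF.C m (k+1) + PMCF.C m k := rfl
      have h2 : PMCF.B m (k+3) = PMCF.a m (k+1) * PMCF.B m (k+2)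
          + PMCF.b m (k+1) * PMCF.B m (k+1) + PMCF.B m k := rfl
      rw [h1, h2]; push_cast; ring
    have h0 : U 2 = -PMCFAux.eps m 0 * U 1 - PMCFAux.del m 0 * U 0 := by
      simp only [hUdef]
      have h1 : PMCF.C m 2 = 1 := rfl
      have h2 : PMCF.C m 1 = 0 := rfl
      have h3 : PMCF.C m 0 = 0 := rfl
      have h4 : PMCF.B m 2 = PMCF.b m 0 := rfl
      have h5 : PMCF.B m 1 = 0 := rfl
      have h6 : PMCF.B m 0 = 1 := rfl
      have h7 : PMCFAux.del m 0 = m.be 0 - ((PMCF.b m 0 : ℚ) : ℚ_[p]) := rfl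
      rw [h1, h2, h3, h4, h5, h6, h7]
      push_cast
      ring
    have hbound := PMCFAux.U_norm m U (PMCFAux.U_rec m U hU h0) 1
      (by
        have h3 : PMCF.C m 0 = 0 := rfl
        have h6 : PMCF.B m 0 = 1 := rfl
        simp [hUdef, h3, h6])
      (by
        have h2 : PMCF.C m 1 = 0 := rfl
        have h5 : PMCF.B m 1 = 0 := rfl
        simp [hUdef, h2, h5]) (n+2)
    have key : m.be 0 - ((PMCF.B m (n+2) : ℚ) : ℚ_[p]) / ((PMCF.C m (n+2) : ℚ) : ℚ_[p])
        = U (n+2) / ((PMCF.C m (n+2) : ℚ) : ℚ_[p]) := by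
      simp only [hUdef]; field_simp
    rw [key, norm_div, hC2, PMCFAux.W_eq]
    rw [div_le_iff₀ (zpow_pos hp0 _), ← zpow_add₀ (ne_of_gt hp0)]
    have hexp : -(PMCF.K m n + (((n+3)/2 : ℕ) : ℤ)) + PMCF.K m n
        = -(((n+2+1)/2 : ℕ) : ℤ) := by
      have : ((n+2+1)/2 : ℕ) = ((n+3)/2 : ℕ) := by omega
      rw [this]; ring
    rw [hexp]
    exact hbound
end

section
/- Let (α, β) ∈ ℚ_p² with infinite p-adic MCF expansion, and set V_n^α = C_n α - A_n, V_n^β = C_n β - B_n. Then ν_p(V_n^α) ≥ ⌊(n+2)/2⌋ and ν_p(V_n^β) ≥ ⌊(n+3)/2⌋; in particular min{ν_p(V_n^α), ν_p(V_n^β)} ≥ ⌊n/2⌋ + 1. -/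
namespace PMCF

variable {p : ℕ} [Fact (Nat.Prime p)]

/-- The shifted expansion: the `p`-adic MCF of `(α₁, β₁)`. -/
def shift (m : PMCF p) : PMCF p where
  s := m.s
  s_int := m.s_int
  s_bound := m.s_bound
  s_close := m.s_close
  al n := m.al (n + 1)
  be n := m.be (n + 1)
  ne n := m.ne (n + 1)
  ral n := m.ral (n + 1)
  rbe n := m.rbe (n + 1)

lemma a_shift (m : PMCF p) (n : ℕ) : a (shift m) n = a m (n + 1) := rfl

lemma b_shift (m : PMCF p) (n : ℕ) : b (shift m) n = b m (n + 1) := rfl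

lemma ABC_shift (m : PMCF p) (n : ℕ) :
    A m (n + 1) = a m 0 * A (shift m) n + B (shift m) n ∧
    B m (n + 1) = b m 0 * A (shift m) n + C (shift m) n ∧
    C m (n + 1) = A (shift m) n := by
  induction n using Nat.strong_induction_on with
  | _ n ih =>
    match n with
    | 0 => refine ⟨?_, ?_, ?_⟩ <;> simp [A, B, C]
    | 1 => refine ⟨?_, ?_, ?_⟩ <;> simp [A, B, C]
    | 2 =>
      refine ⟨?_, ?_, ?_⟩ <;>
        simp [A, B, C, a_shift, b_shift, show (3 : ℕ) = 0 + 3 from rfl] <;> try ring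
    | (k + 3) =>
      obtain ⟨hA1, hB1, hC1⟩ := ih (k + 2) (by omega)
      obtain ⟨hA2, hB2, hC2⟩ := ih (k + 1) (by omega)
      obtain ⟨hA3, hB3, hC3⟩ := ih k (by omega)
      refine ⟨?_, ?_, ?_⟩
      · show A m (k + 1 + 3) = _
        rw [A, show k + 3 = k + 3 from rfl]
        conv_rhs => rw [show A (shift m) (k + 3) =
          a (shift m) (k + 1) * A (shift m) (k + 2) + b (shift m) (k + 1) * A (shift m) (k + 1)
            + A (shift m) k from rfl, show B (shift m) (k + 3) =
          a (shift m) (k + 1) * B (shift m) (k + 2) + b (shift m) (k + 1) * B (shift m) (k + 1)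
            + B (shift m) k from rfl]
        rw [a_shift, b_shift, hA1, hA2, hA3]
        ring
      · show B m (k + 1 + 3) = _
        rw [B]
        conv_rhs => rw [show A (shift m) (k + 3) =
          a (shift m) (k + 1) * A (shift m) (k + 2) + b (shift m) (k + 1) * A (shift m) (k + 1)
            + A (shift m) k from rfl, show C (shift m) (k + 3) =
          a (shift m) (k + 1) * C (shift m) (k + 2) + b (shift m) (k + 1) * C (shift m) (k + 1)
            + C (shift m) k from rfl]
        rw [a_shift, b_shift, hB1, hB2, hB3]
        ring
      · show C m (k + 1 + 3) = _
        rw [C]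
        conv_rhs => rw [show A (shift m) (k + 3) =
          a (shift m) (k + 1) * A (shift m) (k + 2) + b (shift m) (k + 1) * A (shift m) (k + 1)
            + A (shift m) k from rfl]
        rw [a_shift, b_shift, hC1, hC2, hC3]


lemma Vb_succ (m : PMCF p) (n : ℕ) :
    Vb m (n + 1) = -(m.be 0 - ((m.s (m.be 0) : ℚ) : ℚ_[p])) * Va (shift m) n := by
  obtain ⟨hA, hB, hC⟩ := ABC_shift m (n + 2)
  have hd : m.be 0 - ((m.s (m.be 0) : ℚ) : ℚ_[p]) ≠ 0 := m.ne 0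
  have hal : (shift m).al 0 = (m.be 0 - ((m.s (m.be 0) : ℚ) : ℚ_[p]))⁻¹ := m.ral 0
  show ((C m (n + 3) : ℚ) : ℚ_[p]) * m.be 0 - ((B m (n + 3) : ℚ) : ℚ_[p]) = _
  rw [Va, hal, show n + 3 = n + 2 + 1 from rfl, hB, hC]
  have hb : ((b m 0 : ℚ) : ℚ_[p]) = ((m.s (m.be 0) : ℚ) : ℚ_[p]) := rfl
  push_cast
  rw [hb]
  field_simp
  ring

lemma Va_succ (m : PMCF p) (n : ℕ) :
    Va m (n + 1) = Vb (shift m) n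
      - (m.al 0 - ((m.s (m.al 0) : ℚ) : ℚ_[p])) * Va (shift m) n := by
  obtain ⟨hA, hB, hC⟩ := ABC_shift m (n + 2)
  have hd : m.be 0 - ((m.s (m.be 0) : ℚ) : ℚ_[p]) ≠ 0 := m.ne 0
  have hal : (shift m).al 0 = (m.be 0 - ((m.s (m.be 0) : ℚ) : ℚ_[p]))⁻¹ := m.ral 0
  have hbe : (shift m).be 0 = (m.al 0 - ((m.s (m.al 0) : ℚ) : ℚ_[p]))
      * (m.be 0 - ((m.s (m.be 0) : ℚ) : ℚ_[p]))⁻¹ := m.rbe 0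
  show ((C m (n + 3) : ℚ) : ℚ_[p]) * m.al 0 - ((A m (n + 3) : ℚ) : ℚ_[p]) = _
  rw [Va, Vb, hal, hbe, show n + 3 = n + 2 + 1 from rfl, hA, hC]
  have ha : ((a m 0 : ℚ) : ℚ_[p]) = ((m.s (m.al 0) : ℚ) : ℚ_[p]) := rfl
  push_cast
  rw [ha]
  field_simp
  ring

lemma norm_al_sub_le (m : PMCF p) :
    ‖m.al 0 - ((m.s (m.al 0) : ℚ) : ℚ_[p])‖ ≤ (p : ℝ) ^ (-1 : ℤ) := by
  rw [Padic.norm_le_pow_iff_norm_lt_pow_add_one]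
  simpa using m.s_close (m.al 0)

lemma norm_be_sub_le (m : PMCF p) :
    ‖m.be 0 - ((m.s (m.be 0) : ℚ) : ℚ_[p])‖ ≤ (p : ℝ) ^ (-1 : ℤ) := by
  rw [Padic.norm_le_pow_iff_norm_lt_pow_add_one]
  simpa using m.s_close (m.be 0)

lemma Va_zero (m : PMCF p) : Va m 0 = m.al 0 - ((m.s (m.al 0) : ℚ) : ℚ_[p]) := by
  show ((C m 2 : ℚ) : ℚ_[p]) * m.al 0 - ((A m 2 : ℚ) : ℚ_[p]) = _
  have : ((a m 0 : ℚ) : ℚ_[p]) = ((m.s (m.al 0) : ℚ) : ℚ_[p]) := rfl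
  simp [A, C, this]

lemma Vb_zero (m : PMCF p) : Vb m 0 = m.be 0 - ((m.s (m.be 0) : ℚ) : ℚ_[p]) := by
  show ((C m 2 : ℚ) : ℚ_[p]) * m.be 0 - ((B m 2 : ℚ) : ℚ_[p]) = _
  have : ((b m 0 : ℚ) : ℚ_[p]) = ((m.s (m.be 0) : ℚ) : ℚ_[p]) := rfl
  simp [B, C, this]

lemma main_bound (n : ℕ) : ∀ m : PMCF p,
    ‖Va m n‖ ≤ (p : ℝ) ^ (-((((n + 2) / 2 : ℕ) : ℤ))) ∧
    ‖Vb m n‖ ≤ (p : ℝ) ^ (-((((n + 3) / 2 : ℕ) : ℤ))) := by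
  have hp1 : (1 : ℝ) ≤ (p : ℝ) := by
    exact_mod_cast Nat.one_le_iff_ne_zero.mpr (Fact.out : p.Prime).pos.ne'
  have hp0 : (p : ℝ) ≠ 0 := by positivity
  induction n with
  | zero =>
    intro m
    constructor
    · rw [Va_zero]; simpa using norm_al_sub_le m
    · rw [Vb_zero]; simpa using norm_be_sub_le m
  | succ n ih =>
    intro m
    obtain ⟨h1, h2⟩ := ih (shift m)
    have hVb : ‖Vb m (n + 1)‖ ≤ (p : ℝ) ^ (-(((n + 1 + 3) / 2 : ℕ) : ℤ)) := by
      rw [Vb_succ, neg_mul, norm_neg, norm_mul]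
      calc ‖m.be 0 - ((m.s (m.be 0) : ℚ) : ℚ_[p])‖ * ‖Va (shift m) n‖
          ≤ (p : ℝ) ^ (-1 : ℤ) * (p : ℝ) ^ (-((((n + 2) / 2 : ℕ) : ℤ))) := by
            apply mul_le_mul (norm_be_sub_le m) h1 (norm_nonneg _) (by positivity)
        _ = (p : ℝ) ^ ((-1 : ℤ) + -((((n + 2) / 2 : ℕ) : ℤ))) := (zpow_add₀ hp0 _ _).symm
        _ ≤ (p : ℝ) ^ (-(((n + 1 + 3) / 2 : ℕ) : ℤ)) := by
            apply zpow_le_zpow_right₀ hp1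
            have : ((n + 1 + 3) / 2 : ℕ) ≤ (n + 2) / 2 + 1 := by omega
            omega
    refine ⟨?_, hVb⟩
    rw [Va_succ]
    calc ‖Vb (shift m) n - (m.al 0 - ((m.s (m.al 0) : ℚ) : ℚ_[p])) * Va (shift m) n‖
        ≤ max ‖Vb (shift m) n‖
            ‖(m.al 0 - ((m.s (m.al 0) : ℚ) : ℚ_[p])) * Va (shift m) n‖ := by
          simpa [sub_eq_add_neg] using
            Padic.nonarchimedean (Vb (shift m) n)
              (-((m.al 0 - ((m.s (m.al 0) : ℚ) : ℚ_[p])) * Va (shift m) n))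
      _ ≤ (p : ℝ) ^ (-(((n + 1 + 2) / 2 : ℕ) : ℤ)) := by
          apply max_le
          · refine h2.trans (zpow_le_zpow_right₀ hp1 ?_)
            omega
          · rw [norm_mul]
            calc ‖m.al 0 - ((m.s (m.al 0) : ℚ) : ℚ_[p])‖ * ‖Va (shift m) n‖
                ≤ (p : ℝ) ^ (-1 : ℤ) * (p : ℝ) ^ (-((((n + 2) / 2 : ℕ) : ℤ))) := by
                  apply mul_le_mul (norm_al_sub_le m) h1 (norm_nonneg _) (by positivity)
              _ = (p : ℝ) ^ ((-1 : ℤ) + -((((n + 2) / 2 : ℕ) : ℤ))) := (zpow_add₀ hp0 _ _).symm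
              _ ≤ (p : ℝ) ^ (-(((n + 1 + 2) / 2 : ℕ) : ℤ)) := by
                  apply zpow_le_zpow_right₀ hp1
                  have : ((n + 1 + 2) / 2 : ℕ) ≤ (n + 2) / 2 + 1 := by omega
                  omega

end PMCF

/-- `ν_p(V_n^α) ≥ ⌊(n+2)/2⌋`, `ν_p(V_n^β) ≥ ⌊(n+3)/2⌋`, and in particular
`min{ν_p(V_n^α), ν_p(V_n^β)} ≥ ⌊n/2⌋ + 1` (stated via the `p`-adic norm). -/
theorem pmcf_V_valuation_lower_bound (p : ℕ) [Fact (Nat.Prime p)] (hp : Odd p)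
    (m : PMCF p) (n : ℕ) :
    ‖PMCF.Va m n‖ ≤ (p : ℝ) ^ (-((((n + 2) / 2 : ℕ) : ℤ))) ∧
      ‖PMCF.Vb m n‖ ≤ (p : ℝ) ^ (-((((n + 3) / 2 : ℕ) : ℤ))) ∧
      max ‖PMCF.Va m n‖ ‖PMCF.Vb m n‖ ≤ (p : ℝ) ^ (-(((n / 2 : ℕ) : ℤ) + 1)) := by
  obtain ⟨h1, h2⟩ := PMCF.main_bound n m
  have hp1 : (1 : ℝ) ≤ (p : ℝ) := by
    exact_mod_cast Nat.one_le_iff_ne_zero.mpr (Fact.out : p.Prime).pos.ne'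
  refine ⟨h1, h2, max_le ?_ ?_⟩
  · refine h1.trans (zpow_le_zpow_right₀ hp1 ?_)
    have : n / 2 + 1 ≤ (n + 2) / 2 := by omega
    omega
  · refine h2.trans (zpow_le_zpow_right₀ hp1 ?_)
    have : n / 2 + 1 ≤ (n + 3) / 2 := by omega
    omega
end

section
/- For the p-adic MCF of (α, β), the identity (α - Q_{n-1}^α)(β - Q_{n-2}^β) - (β - Q_{n-1}^β)(α - Q_{n-2}^α) = 1/(C_{n-1} C_{n-2} (α_n C_{n-1} + β_n C_{n-2} + C_{n-3})) holds, where Q_k^α = A_k/C_k and Q_k^β = B_k/C_k. -/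
namespace PMCF

variable {p : ℕ} [Fact (Nat.Prime p)]

lemma A_rec (m : PMCF p) (n : ℕ) :
    A m (n + 3) = a m (n + 1) * A m (n + 2) + b m (n + 1) * A m (n + 1) + A m n := rfl

lemma B_rec (m : PMCF p) (n : ℕ) :
    B m (n + 3) = a m (n + 1) * B m (n + 2) + b m (n + 1) * B m (n + 1) + B m n := rfl

lemma C_rec (m : PMCF p) (n : ℕ) :
    C m (n + 3) = a m (n + 1) * C m (n + 2) + b m (n + 1) * C m (n + 1) + C m n := rfl

lemma det_eq_one (m : PMCF p) (n : ℕ) :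
    A m (n+2) * (B m (n+1) * C m n - B m n * C m (n+1))
    - B m (n+2) * (A m (n+1) * C m n - A m n * C m (n+1))
    + C m (n+2) * (A m (n+1) * B m n - A m n * B m (n+1)) = 1 := by
  induction n with
  | zero => show a m 0 * _ - b m 0 * _ + 1 * _ = 1; norm_num [A, B, C]
  | succ k ih =>
      rw [show k + 1 + 2 = k + 3 from rfl, A_rec, B_rec, C_rec]
      linear_combination ih

lemma al_mul (m : PMCF p) (n : ℕ) :
    m.al 0 * (m.al (n+1) * ((C m (n+2) : ℚ) : ℚ_[p]) + m.be (n+1) * ((C m (n+1) : ℚ) : ℚ_[p])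
      + ((C m n : ℚ) : ℚ_[p]))
    = m.al (n+1) * ((A m (n+2) : ℚ) : ℚ_[p]) + m.be (n+1) * ((A m (n+1) : ℚ) : ℚ_[p])
      + ((A m n : ℚ) : ℚ_[p]) := by
  induction n with
  | zero =>
      have hd := m.ne 0
      rw [m.ral 0, m.rbe 0]
      show m.al 0 * (_ * ((1:ℚ):ℚ_[p]) + _ * ((0:ℚ):ℚ_[p]) + ((0:ℚ):ℚ_[p]))
        = _ * ((a m 0 : ℚ):ℚ_[p]) + _ * ((1:ℚ):ℚ_[p]) + ((0:ℚ):ℚ_[p])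
      simp only [a, b]
      push_cast
      field_simp
      ring
  | succ k ih =>
      have hd := m.ne (k + 1)
      rw [show k + 1 + 2 = k + 3 from rfl, m.ral (k+1), m.rbe (k+1), A_rec, C_rec]
      simp only [a, b]
      push_cast
      field_simp
      linear_combination ih

lemma be_mul (m : PMCF p) (n : ℕ) :
    m.be 0 * (m.al (n+1) * ((C m (n+2) : ℚ) : ℚ_[p]) + m.be (n+1) * ((C m (n+1) : ℚ) : ℚ_[p])
      + ((C m n : ℚ) : ℚ_[p]))
    = m.al (n+1) * ((B m (n+2) : ℚ) : ℚ_[p]) + m.be (n+1) * ((B m (n+1) : ℚ) : ℚ_[p])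
      + ((B m n : ℚ) : ℚ_[p]) := by
  induction n with
  | zero =>
      have hd := m.ne 0
      rw [m.ral 0, m.rbe 0]
      show m.be 0 * (_ * ((1:ℚ):ℚ_[p]) + _ * ((0:ℚ):ℚ_[p]) + ((0:ℚ):ℚ_[p]))
        = _ * ((b m 0 : ℚ):ℚ_[p]) + _ * ((0:ℚ):ℚ_[p]) + ((1:ℚ):ℚ_[p])
      simp only [a, b]
      push_cast
      field_simp
      ring
  | succ k ih =>
      have hd := m.ne (k + 1)
      rw [show k + 1 + 2 = k + 3 from rfl, m.ral (k+1), m.rbe (k+1), B_rec, C_rec]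
      simp only [a, b]
      push_cast
      field_simp
      linear_combination ih

end PMCF

/-- The identity
`(α - Q_{N-1}^α)(β - Q_{N-2}^β) - (β - Q_{N-1}^β)(α - Q_{N-2}^α)
  = 1/(C_{N-1} C_{N-2} (α_N C_{N-1} + β_N C_{N-2} + C_{N-3}))`,
stated here with `N = n + 1 ≥ 1`, assuming all appearing denominators are non-zero.
(Recall `C (k+2)` is the paper's `C_k`.) -/
theorem pmcf_difference_identity (p : ℕ) [Fact (Nat.Prime p)] (hp : Odd p)
    (m : PMCF p) (n : ℕ)
    (h1 : ((PMCF.C m (n + 2) : ℚ) : ℚ_[p]) ≠ 0)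
    (h2 : ((PMCF.C m (n + 1) : ℚ) : ℚ_[p]) ≠ 0)
    (h3 : m.al (n + 1) * ((PMCF.C m (n + 2) : ℚ) : ℚ_[p]) +
          m.be (n + 1) * ((PMCF.C m (n + 1) : ℚ) : ℚ_[p]) +
          ((PMCF.C m n : ℚ) : ℚ_[p]) ≠ 0) :
    (m.al 0 - ((PMCF.A m (n + 2) : ℚ) : ℚ_[p]) / ((PMCF.C m (n + 2) : ℚ) : ℚ_[p])) *
        (m.be 0 - ((PMCF.B m (n + 1) : ℚ) : ℚ_[p]) / ((PMCF.C m (n + 1) : ℚ) : ℚ_[p])) -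
      (m.be 0 - ((PMCF.B m (n + 2) : ℚ) : ℚ_[p]) / ((PMCF.C m (n + 2) : ℚ) : ℚ_[p])) *
        (m.al 0 - ((PMCF.A m (n + 1) : ℚ) : ℚ_[p]) / ((PMCF.C m (n + 1) : ℚ) : ℚ_[p])) =
      1 / (((PMCF.C m (n + 2) : ℚ) : ℚ_[p]) * ((PMCF.C m (n + 1) : ℚ) : ℚ_[p]) *
        (m.al (n + 1) * ((PMCF.C m (n + 2) : ℚ) : ℚ_[p]) +
         m.be (n + 1) * ((PMCF.C m (n + 1) : ℚ) : ℚ_[p]) +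
         ((PMCF.C m n : ℚ) : ℚ_[p]))) := by
  set u := m.al 0
  set v := m.be 0
  set x := m.al (n+1)
  set y := m.be (n+1)
  set c2 := ((PMCF.C m (n+2) : ℚ) : ℚ_[p])
  set c1 := ((PMCF.C m (n+1) : ℚ) : ℚ_[p])
  set c0 := ((PMCF.C m n : ℚ) : ℚ_[p])
  set A2 := ((PMCF.A m (n+2) : ℚ) : ℚ_[p])
  set A1 := ((PMCF.A m (n+1) : ℚ) : ℚ_[p])
  set A0 := ((PMCF.A m n : ℚ) : ℚ_[p])
  set B2 := ((PMCF.B m (n+2) : ℚ) : ℚ_[p])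
  set B1 := ((PMCF.B m (n+1) : ℚ) : ℚ_[p])
  set B0 := ((PMCF.B m n : ℚ) : ℚ_[p])
  have hα : u * (x * c2 + y * c1 + c0) = x * A2 + y * A1 + A0 := PMCF.al_mul m n
  have hβ : v * (x * c2 + y * c1 + c0) = x * B2 + y * B1 + B0 := PMCF.be_mul m n
  have hdet : A2 * (B1 * c0 - B0 * c1) - B2 * (A1 * c0 - A0 * c1)
      + c2 * (A1 * B0 - A0 * B1) = 1 := by
    have hq := PMCF.det_eq_one m n
    have hcast : ((PMCF.A m (n+2) * (PMCF.B m (n+1) * PMCF.C m n - PMCF.B m n * PMCF.C m (n+1))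
      - PMCF.B m (n+2) * (PMCF.A m (n+1) * PMCF.C m n - PMCF.A m n * PMCF.C m (n+1))
      + PMCF.C m (n+2) * (PMCF.A m (n+1) * PMCF.B m n - PMCF.A m n * PMCF.B m (n+1)) : ℚ)
        : ℚ_[p]) = ((1 : ℚ) : ℚ_[p]) := by
      rw [hq]
    push_cast at hcast
    linear_combination hcast
  have hne : c2 * c1 * (x * c2 + y * c1 + c0) ≠ 0 := mul_ne_zero (mul_ne_zero h1 h2) h3
  have key : ((u * c2 - A2) * (v * c1 - B1) - (v * c2 - B2) * (u * c1 - A1))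
      * (x * c2 + y * c1 + c0) = 1 := by
    linear_combination (c1 * B2 - c2 * B1) * hα + (c2 * A1 - c1 * A2) * hβ + hdet
  have red : (u - A2 / c2) * (v - B1 / c1) - (v - B2 / c2) * (u - A1 / c1)
      = ((u * c2 - A2) * (v * c1 - B1) - (v * c2 - B2) * (u * c1 - A1)) / (c2 * c1) := by
    field_simp
  rw [red, div_eq_div_iff (mul_ne_zero h1 h2) hne]
  linear_combination c2 * c1 * key
end

section
/- Let (ℓ_n)_{n≥0} be positive natural numbers, set ℓ_{-1} = ℓ_{-2} = 0 and f(n) = Σ_{j=0}^n ℓ_j. If an infinite p-adic MCF satisfies h_{n+1} ≥ ℓ_n and k_{n+1} ≥ ℓ_n + ℓ_{n-1} for all n ≥ 0 (where h_n = ν_p(b_n/a_n) and k_n = ν_p(1/a_n)), then min{ν_p(V_n^α), ν_p(V_n^β)} ≥ f(n) for every n ∈ ℕ. -/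
section Aux

variable {p : ℕ} [Fact (Nat.Prime p)]

private theorem aux_s_norm_ge_one (q : ℚ) (z : ℤ) (k : ℕ) (hq : q = (z : ℚ) / (p : ℚ) ^ k)
    (hb : |q| < (p : ℚ) / 2) (h0 : q ≠ 0) : 1 ≤ ‖((q : ℚ) : ℚ_[p])‖ := by
  have hp := (Fact.out : p.Prime)
  have hp1 : (1:ℚ) < p := by exact_mod_cast hp.one_lt
  have hz : z ≠ 0 := by rintro rfl; simp at hq; exact h0 hq
  rw [Padic.eq_padicNorm, padicNorm.eq_zpow_of_nonzero h0]
  have hv : padicValRat p q ≤ 0 := by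
    by_contra hlt
    push_neg at hlt
    have hvq : padicValRat p q = padicValInt p z - k := by
      rw [hq, padicValRat.div (p := p) (by exact_mod_cast hz) (by positivity)]
      have h1 : padicValRat p (z : ℚ) = padicValInt p z := padicValRat.of_int
      have h2 : padicValRat p ((p:ℚ) ^ k) = k := by
        rw [show ((p:ℚ)^k) = ((p^k : ℕ) : ℚ) by push_cast; ring, padicValRat.of_nat]
        rw [padicValNat.prime_pow]
      rw [h1, h2]
    have hk1 : (k : ℤ) + 1 ≤ padicValInt p z := by omega
    have hdvd : (p : ℤ) ^ (k + 1) ∣ z := by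
      rw [padicValInt_dvd_iff]; right; exact_mod_cast hk1
    have hle : ((p:ℤ) ^ (k + 1) : ℤ) ≤ |z| :=
      Int.le_of_dvd (abs_pos.mpr hz) ((dvd_abs _ _).mpr hdvd)
    have habs : |q| = |(z:ℚ)| / (p:ℚ) ^ k := by
      rw [hq, abs_div, abs_of_pos (by positivity : (0:ℚ) < (p:ℚ)^k)]
    have hge : (p : ℚ) ≤ |q| := by
      rw [habs, le_div_iff₀ (by positivity)]
      calc (p:ℚ) * (p:ℚ)^k = (p:ℚ)^(k+1) := by ring
      _ ≤ |(z:ℚ)| := by rw [← Int.cast_abs]; exact_mod_cast hle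
    have : (p:ℚ) < (p:ℚ)/2 := lt_of_le_of_lt hge hb
    linarith
  have : (1:ℚ) ≤ (p:ℚ) ^ (-padicValRat p q) := one_le_zpow₀ hp1.le (by omega)
  exact_mod_cast this

/-- `1 ≤ ‖s x‖` when `s x ≠ 0`. -/
private theorem aux_s_ge_one (m : PMCF p) (x : ℚ_[p]) (h : m.s x ≠ 0) :
    1 ≤ ‖((m.s x : ℚ) : ℚ_[p])‖ := by
  obtain ⟨z, k, hzk⟩ := m.s_int x
  exact aux_s_norm_ge_one _ z k hzk (m.s_bound x) h

private theorem aux_norm_rat (q : ℚ) (h : q ≠ 0) :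
    ‖((q : ℚ) : ℚ_[p])‖ = (p : ℝ) ^ (-padicValRat p q) := by
  rw [Padic.eq_padicNorm, padicNorm.eq_zpow_of_nonzero h]
  push_cast
  rfl

/-- The linear form `C_n x - X_n`. -/
private noncomputable def pW (m : PMCF p) (x : ℚ_[p]) (X : ℕ → ℚ) (n : ℕ) : ℚ_[p] :=
  ((PMCF.C m n : ℚ) : ℚ_[p]) * x - ((X n : ℚ) : ℚ_[p])

private theorem pW_rec (m : PMCF p) (x : ℚ_[p]) (X : ℕ → ℚ)
    (hX3 : ∀ n, X (n+3) = PMCF.a m (n+1) * X (n+2) + PMCF.b m (n+1) * X (n+1) + X n)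
    (base : pW m x X 2 + (m.al 0 - ((PMCF.a m 0 : ℚ) : ℚ_[p])) * pW m x X 1
      + (m.be 0 - ((PMCF.b m 0 : ℚ) : ℚ_[p])) * pW m x X 0 = 0) :
    ∀ n, pW m x X (n+2) + (m.al n - ((PMCF.a m n : ℚ) : ℚ_[p])) * pW m x X (n+1)
      + (m.be n - ((PMCF.b m n : ℚ) : ℚ_[p])) * pW m x X n = 0 := by
  intro n
  induction n with
  | zero => exact base
  | succ n ih =>
    have hd : m.be n - ((PMCF.b m n : ℚ) : ℚ_[p]) ≠ 0 := m.ne n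
    have hW3 : pW m x X (n+3) = ((PMCF.a m (n+1) : ℚ) : ℚ_[p]) * pW m x X (n+2)
        + ((PMCF.b m (n+1) : ℚ) : ℚ_[p]) * pW m x X (n+1) + pW m x X n := by
      simp only [pW, PMCF.C, hX3 n]
      push_cast
      ring
    have hal : m.al (n+1) = (m.be n - ((PMCF.b m n : ℚ) : ℚ_[p]))⁻¹ := m.ral n
    have hbe : m.be (n+1) = (m.al n - ((PMCF.a m n : ℚ) : ℚ_[p]))
        * (m.be n - ((PMCF.b m n : ℚ) : ℚ_[p]))⁻¹ := m.rbe n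
    rw [hW3, hal, hbe]
    field_simp
    linear_combination ih

private theorem pW_recA (m : PMCF p) :
    ∀ n, pW m (m.al 0) (PMCF.A m) (n+2)
      + (m.al n - ((PMCF.a m n : ℚ) : ℚ_[p])) * pW m (m.al 0) (PMCF.A m) (n+1)
      + (m.be n - ((PMCF.b m n : ℚ) : ℚ_[p])) * pW m (m.al 0) (PMCF.A m) n = 0 := by
  apply pW_rec
  · intro n; rfl
  · simp only [pW, PMCF.A, PMCF.C]
    push_cast
    ring

private theorem pW_recB (m : PMCF p) :
    ∀ n, pW m (m.be 0) (PMCF.B m) (n+2)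
      + (m.al n - ((PMCF.a m n : ℚ) : ℚ_[p])) * pW m (m.be 0) (PMCF.B m) (n+1)
      + (m.be n - ((PMCF.b m n : ℚ) : ℚ_[p])) * pW m (m.be 0) (PMCF.B m) n = 0 := by
  apply pW_rec
  · intro n; rfl
  · simp only [pW, PMCF.B, PMCF.C]
    push_cast
    ring

private theorem aux_a_succ (m : PMCF p) (n : ℕ) :
    PMCF.a m (n+1) ≠ 0 ∧
    ‖m.be n - ((PMCF.b m n : ℚ) : ℚ_[p])‖ = (p:ℝ) ^ (padicValRat p (PMCF.a m (n+1))) := by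
  have hd : m.be n - ((PMCF.b m n : ℚ) : ℚ_[p]) ≠ 0 := m.ne n
  have hdlt : ‖m.be n - ((PMCF.b m n : ℚ) : ℚ_[p])‖ < 1 := m.s_close (m.be n)
  have hdpos : 0 < ‖m.be n - ((PMCF.b m n : ℚ) : ℚ_[p])‖ := norm_pos_iff.mpr hd
  have hal : m.al (n+1) = (m.be n - ((PMCF.b m n : ℚ) : ℚ_[p]))⁻¹ := m.ral n
  have h1 : 1 < ‖m.al (n+1)‖ := by
    rw [hal, norm_inv]; exact (one_lt_inv₀ hdpos).mpr hdlt
  have hclose : ‖m.al (n+1) - ((PMCF.a m (n+1) : ℚ) : ℚ_[p])‖ < 1 := m.s_close (m.al (n+1))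
  have ha0 : PMCF.a m (n+1) ≠ 0 := by
    intro h
    rw [show PMCF.a m (n+1) = m.s (m.al (n+1)) from rfl] at h
    rw [show ((PMCF.a m (n+1) : ℚ) : ℚ_[p]) = ((m.s (m.al (n+1)) : ℚ) : ℚ_[p]) from rfl, h] at hclose
    simp at hclose
    exact absurd hclose (not_lt.mpr h1.le)
  have hge1 : 1 ≤ ‖((PMCF.a m (n+1) : ℚ) : ℚ_[p])‖ := aux_s_ge_one m (m.al (n+1)) ha0
  have heq : ‖((PMCF.a m (n+1) : ℚ) : ℚ_[p])‖ = ‖m.al (n+1)‖ := by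
    apply le_antisymm
    · calc ‖((PMCF.a m (n+1) : ℚ) : ℚ_[p])‖
          = ‖m.al (n+1) + -(m.al (n+1) - ((PMCF.a m (n+1) : ℚ) : ℚ_[p]))‖ := by ring_nf
        _ ≤ max ‖m.al (n+1)‖ ‖-(m.al (n+1) - ((PMCF.a m (n+1) : ℚ) : ℚ_[p]))‖ :=
            Padic.nonarchimedean _ _
        _ ≤ ‖m.al (n+1)‖ := by
            rw [norm_neg]
            exact max_le le_rfl (le_of_lt (lt_trans hclose h1))
    · calc ‖m.al (n+1)‖
          = ‖((PMCF.a m (n+1) : ℚ) : ℚ_[p]) + (m.al (n+1) - ((PMCF.a m (n+1) : ℚ) : ℚ_[p]))‖ := by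
            ring_nf
        _ ≤ max ‖((PMCF.a m (n+1) : ℚ) : ℚ_[p])‖ ‖m.al (n+1) - ((PMCF.a m (n+1) : ℚ) : ℚ_[p])‖ :=
            Padic.nonarchimedean _ _
        _ ≤ ‖((PMCF.a m (n+1) : ℚ) : ℚ_[p])‖ :=
            max_le le_rfl (le_trans hclose.le hge1)
  refine ⟨ha0, ?_⟩
  have hpz : ((p:ℝ)) ≠ 0 := by
    have := (Fact.out : p.Prime).pos; positivity
  have : ‖m.be n - ((PMCF.b m n : ℚ) : ℚ_[p])‖ = ‖m.al (n+1)‖⁻¹ := by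
    rw [hal, norm_inv, inv_inv]
  rw [this, ← heq, aux_norm_rat _ ha0, ← zpow_neg, neg_neg]

/-- The exponent function: `g 0 = g 1 = 0`, `g (k+2) = Σ_{j ≤ k} ℓ_j`. -/
private def gfun (l : ℕ → ℕ) : ℕ → ℤ
  | 0 => 0
  | 1 => 0
  | (k+2) => ∑ j ∈ Finset.range (k+1), (l j : ℤ)

private theorem gfun_succ (l : ℕ → ℕ) : ∀ k, gfun l (k+2) = gfun l (k+1) + l k := by
  intro k
  cases k with
  | zero => simp [gfun]
  | succ k => simp [gfun, Finset.sum_range_succ]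

end Aux
/-- If `h_{n+1} ≥ ℓ_n` and `k_{n+1} ≥ ℓ_n + ℓ_{n-1}` (with `ℓ_{-1} = 0` and
positive `ℓ_n`, and the convention that `h_n = ∞` when `b_n = 0`), then
`min{ν_p(V_n^α), ν_p(V_n^β)} ≥ f(n) = Σ_{j=0}^n ℓ_j` (stated via the norm). -/
theorem pmcf_improved_V_lower_bound (p : ℕ) [Fact (Nat.Prime p)] (hp : Odd p)
    (m : PMCF p) (l : ℕ → ℕ) (hl : ∀ n, 0 < l n)
    (hh : ∀ n, PMCF.b m (n + 1) = 0 ∨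
      (l n : ℤ) ≤ padicValRat p (PMCF.b m (n + 1)) - padicValRat p (PMCF.a m (n + 1)))
    (hk0 : (l 0 : ℤ) ≤ -padicValRat p (PMCF.a m 1))
    (hk : ∀ n, (l (n + 1) : ℤ) + (l n : ℤ) ≤ -padicValRat p (PMCF.a m (n + 2))) :
    ∀ n, max ‖PMCF.Va m n‖ ‖PMCF.Vb m n‖ ≤
      (p : ℝ) ^ (-(∑ j ∈ Finset.range (n + 1), (l j : ℤ))) := by
  have hpP := (Fact.out : p.Prime)
  have hp1 : (1:ℝ) < p := by exact_mod_cast hpP.one_lt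
  have hp0 : (0:ℝ) < p := lt_trans one_pos hp1
  have hpz : (p:ℝ) ≠ 0 := ne_of_gt hp0
  -- bound on ‖β_k - b_k‖
  have hbd : ∀ k, ‖m.be k - ((PMCF.b m k : ℚ) : ℚ_[p])‖ ≤ (p:ℝ) ^ (gfun l k - gfun l (k+2)) := by
    intro k
    rw [(aux_a_succ m k).2]
    apply zpow_le_zpow_right₀ hp1.le
    cases k with
    | zero =>
      show padicValRat p (PMCF.a m 1) ≤ gfun l 0 - gfun l 2
      have e0 : gfun l 0 = 0 := rfl
      have e2 : gfun l 2 = (l 0 : ℤ) := by simp [gfun]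
      rw [e0, e2]
      omega
    | succ j =>
      show padicValRat p (PMCF.a m (j+2)) ≤ gfun l (j+1) - gfun l (j+3)
      have h3 : gfun l (j+3) = gfun l (j+2) + l (j+1) := gfun_succ l (j+1)
      have h4 : gfun l (j+2) = gfun l (j+1) + l j := gfun_succ l j
      have := hk j
      omega
  -- bound on ‖α_k - a_k‖
  have hala : ∀ k, ‖m.al k - ((PMCF.a m k : ℚ) : ℚ_[p])‖ ≤ (p:ℝ) ^ (-(l k : ℤ)) := by
    intro k
    have hdne : m.be k - ((PMCF.b m k : ℚ) : ℚ_[p]) ≠ 0 := m.ne k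
    have hrbe := m.rbe k
    rw [show m.s (m.be k) = PMCF.b m k from rfl, show m.s (m.al k) = PMCF.a m k from rfl] at hrbe
    have heq : m.al k - ((PMCF.a m k : ℚ) : ℚ_[p])
        = m.be (k+1) * (m.be k - ((PMCF.b m k : ℚ) : ℚ_[p])) := by
      rw [hrbe, mul_assoc, inv_mul_cancel₀ hdne, mul_one]
    rw [heq, norm_mul]
    have hdb : ‖m.be k - ((PMCF.b m k : ℚ) : ℚ_[p])‖
        = (p:ℝ) ^ (padicValRat p (PMCF.a m (k+1))) := (aux_a_succ m k).2
    -- ‖β_{k+1}‖ ≤ p^{-v(b_{k+1})}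
    have hbeb : ‖m.be (k+1)‖ ≤ (p:ℝ) ^ (-(padicValRat p (PMCF.b m (k+1)))) := by
      by_cases hb0 : PMCF.b m (k+1) = 0
      · rw [hb0]
        have := m.s_close (m.be (k+1))
        rw [show m.s (m.be (k+1)) = PMCF.b m (k+1) from rfl, hb0] at this
        simp only [padicValRat.zero, neg_zero, zpow_zero]
        simpa using this.le
      · have hclose := m.s_close (m.be (k+1))
        rw [show m.s (m.be (k+1)) = PMCF.b m (k+1) from rfl] at hclose
        have hge1 : 1 ≤ ‖((PMCF.b m (k+1) : ℚ) : ℚ_[p])‖ := aux_s_ge_one m (m.be (k+1)) hb0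
        have : ‖m.be (k+1)‖ ≤ ‖((PMCF.b m (k+1) : ℚ) : ℚ_[p])‖ := by
          calc ‖m.be (k+1)‖
              = ‖((PMCF.b m (k+1) : ℚ) : ℚ_[p]) + (m.be (k+1) - ((PMCF.b m (k+1) : ℚ) : ℚ_[p]))‖ := by
                ring_nf
            _ ≤ max ‖((PMCF.b m (k+1) : ℚ) : ℚ_[p])‖
                  ‖m.be (k+1) - ((PMCF.b m (k+1) : ℚ) : ℚ_[p])‖ := Padic.nonarchimedean _ _
            _ ≤ ‖((PMCF.b m (k+1) : ℚ) : ℚ_[p])‖ := max_le le_rfl (le_trans hclose.le hge1)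
        rw [aux_norm_rat _ hb0] at this
        exact this
    rcases hh k with hb0 | hbound
    · -- b_{k+1} = 0 : use v(b)=0 and k-hypotheses directly
      have hb1 : ‖m.be (k+1)‖ ≤ 1 := by
        have := hbeb; rw [hb0] at this; simpa using this
      have hva : padicValRat p (PMCF.a m (k+1)) ≤ -(l k : ℤ) := by
        cases k with
        | zero => show padicValRat p (PMCF.a m 1) ≤ -(l 0 : ℤ); omega
        | succ j =>
          show padicValRat p (PMCF.a m (j+2)) ≤ -(l (j+1) : ℤ)
          have := hk j; have := (hl j).le; omega
      calc ‖m.be (k+1)‖ * ‖m.be k - ((PMCF.b m k : ℚ) : ℚ_[p])‖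
          ≤ 1 * ((p:ℝ) ^ (padicValRat p (PMCF.a m (k+1)))) := by
            apply mul_le_mul hb1 (le_of_eq hdb) (norm_nonneg _) zero_le_one
        _ = (p:ℝ) ^ (padicValRat p (PMCF.a m (k+1))) := one_mul _
        _ ≤ (p:ℝ) ^ (-(l k : ℤ)) := zpow_le_zpow_right₀ hp1.le hva
    · calc ‖m.be (k+1)‖ * ‖m.be k - ((PMCF.b m k : ℚ) : ℚ_[p])‖
          ≤ ((p:ℝ) ^ (-(padicValRat p (PMCF.b m (k+1)))))
            * ((p:ℝ) ^ (padicValRat p (PMCF.a m (k+1)))) := by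
            apply mul_le_mul hbeb (le_of_eq hdb) (norm_nonneg _) (by positivity)
        _ = (p:ℝ) ^ (-(padicValRat p (PMCF.b m (k+1))) + padicValRat p (PMCF.a m (k+1))) := by
            rw [zpow_add₀ hpz]
        _ ≤ (p:ℝ) ^ (-(l k : ℤ)) := zpow_le_zpow_right₀ hp1.le (by omega)
  -- main induction
  have key : ∀ k, ‖pW m (m.al 0) (PMCF.A m) k‖ ≤ (p:ℝ) ^ (-(gfun l k))
      ∧ ‖pW m (m.be 0) (PMCF.B m) k‖ ≤ (p:ℝ) ^ (-(gfun l k)) := by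
    intro k
    induction k using Nat.twoStepInduction with
    | zero =>
      constructor <;> simp [pW, PMCF.A, PMCF.B, PMCF.C, gfun]
    | one =>
      constructor <;> simp [pW, PMCF.A, PMCF.B, PMCF.C, gfun]
    | more k ih1 ih2 =>
      have hstep : ∀ (x : ℚ_[p]) (X : ℕ → ℚ),
          (pW m x X (k+2) + (m.al k - ((PMCF.a m k : ℚ) : ℚ_[p])) * pW m x X (k+1)
            + (m.be k - ((PMCF.b m k : ℚ) : ℚ_[p])) * pW m x X k = 0) →
          ‖pW m x X (k+1)‖ ≤ (p:ℝ) ^ (-(gfun l (k+1))) →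
          ‖pW m x X k‖ ≤ (p:ℝ) ^ (-(gfun l k)) →
          ‖pW m x X (k+2)‖ ≤ (p:ℝ) ^ (-(gfun l (k+2))) := by
        intro x X hrec h1 h0
        have hW : pW m x X (k+2)
            = -((m.al k - ((PMCF.a m k : ℚ) : ℚ_[p])) * pW m x X (k+1))
              + -((m.be k - ((PMCF.b m k : ℚ) : ℚ_[p])) * pW m x X k) := by
          linear_combination hrec
        rw [hW]
        calc ‖_ + _‖ ≤ max ‖-((m.al k - ((PMCF.a m k : ℚ) : ℚ_[p])) * pW m x X (k+1))‖
              ‖-((m.be k - ((PMCF.b m k : ℚ) : ℚ_[p])) * pW m x X k)‖ :=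
            Padic.nonarchimedean _ _
          _ ≤ (p:ℝ) ^ (-(gfun l (k+2))) := by
            apply max_le
            · rw [norm_neg, norm_mul]
              calc ‖m.al k - ((PMCF.a m k : ℚ) : ℚ_[p])‖ * ‖pW m x X (k+1)‖
                  ≤ ((p:ℝ) ^ (-(l k : ℤ))) * ((p:ℝ) ^ (-(gfun l (k+1)))) :=
                    mul_le_mul (hala k) h1 (norm_nonneg _) (by positivity)
                _ = (p:ℝ) ^ (-(l k : ℤ) + -(gfun l (k+1))) := by rw [zpow_add₀ hpz]
                _ ≤ (p:ℝ) ^ (-(gfun l (k+2))) := by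
                    apply zpow_le_zpow_right₀ hp1.le
                    have := gfun_succ l k
                    omega
            · rw [norm_neg, norm_mul]
              calc ‖m.be k - ((PMCF.b m k : ℚ) : ℚ_[p])‖ * ‖pW m x X k‖
                  ≤ ((p:ℝ) ^ (gfun l k - gfun l (k+2))) * ((p:ℝ) ^ (-(gfun l k))) :=
                    mul_le_mul (hbd k) h0 (norm_nonneg _) (by positivity)
                _ = (p:ℝ) ^ (gfun l k - gfun l (k+2) + -(gfun l k)) := by rw [zpow_add₀ hpz]
                _ ≤ (p:ℝ) ^ (-(gfun l (k+2))) := by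
                    apply zpow_le_zpow_right₀ hp1.le
                    omega
      exact ⟨hstep (m.al 0) (PMCF.A m) (pW_recA m k) ih2.1 ih1.1,
        hstep (m.be 0) (PMCF.B m) (pW_recB m k) ih2.2 ih1.2⟩
  intro n
  have hk2 := key (n+2)
  have hg : gfun l (n+2) = ∑ j ∈ Finset.range (n+1), (l j : ℤ) := rfl
  have hVa : PMCF.Va m n = pW m (m.al 0) (PMCF.A m) (n+2) := rfl
  have hVb : PMCF.Vb m n = pW m (m.be 0) (PMCF.B m) (n+2) := rfl
  rw [hVa, hVb]
  exact max_le (hg ▸ hk2.1) (hg ▸ hk2.2)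
end

section
/- For any function f: ℕ → ℕ there exist infinitely many pairs (α, β) ∈ ℚ_p² whose p-adic MCF expansion is infinite and satisfies min{ν_p(C_n α - A_n), ν_p(C_n β - B_n)} ≥ f(n) for every n. -/
namespace PmcfProof

variable {p : ℕ} [hpf : Fact (Nat.Prime p)]

lemma one_lt_P : (1:ℝ) < (p:ℝ) := by exact_mod_cast hpf.out.one_lt
lemma P_pos : (0:ℝ) < (p:ℝ) := lt_trans one_pos one_lt_P
lemma P_ne : ((p:ℝ)) ≠ 0 := ne_of_gt P_pos

lemma Pz_le {a b : ℤ} (h : a ≤ b) : (p:ℝ)^a ≤ (p:ℝ)^b :=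
  zpow_le_zpow_right₀ one_lt_P.le h
lemma Pz_lt {a b : ℤ} (h : a < b) : (p:ℝ)^a < (p:ℝ)^b :=
  zpow_lt_zpow_right₀ one_lt_P h
lemma Pz_pos (a : ℤ) : 0 < (p:ℝ)^a := zpow_pos P_pos a

lemma norm_add_big {a b : ℚ_[p]} (h : ‖b‖ < ‖a‖) : ‖a + b‖ = ‖a‖ := by
  rw [Padic.add_eq_max_of_ne h.ne', max_eq_left h.le]

noncomputable def bseq (u : ℕ → ℕ) : ℕ → ℕ → ℚ_[p]
  | 0, n => (p : ℚ_[p]) ^ (-(u n : ℤ))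
  | 1, n => (p : ℚ_[p]) ^ (-(u n : ℤ)) + (bseq u 0 (n+1) * bseq u 0 (n+2))⁻¹
  | d+2, n => (p : ℚ_[p]) ^ (-(u n : ℤ)) + (bseq u (d+1) (n+1) * bseq u (d) (n+2))⁻¹

variable {u : ℕ → ℕ}

lemma bseq_eq0 (n : ℕ) : bseq (p := p) u 0 n = (p : ℚ_[p]) ^ (-(u n : ℤ)) := rfl

lemma bseq_eq1 (n : ℕ) : bseq (p := p) u 1 n
    = (p : ℚ_[p]) ^ (-(u n : ℤ)) + (bseq u 0 (n+1) * bseq u 0 (n+2))⁻¹ := rfl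

lemma bseq_eq2 (d n : ℕ) : bseq (p := p) u (d+2) n
    = (p : ℚ_[p]) ^ (-(u n : ℤ)) + (bseq u (d+1) (n+1) * bseq u (d) (n+2))⁻¹ := rfl

lemma norm_inv_mul {x y : ℚ_[p]} {b c : ℕ}
    (hx : ‖x‖ = (p:ℝ) ^ (b:ℤ)) (hy : ‖y‖ = (p:ℝ) ^ (c:ℤ)) :
    ‖(x * y)⁻¹‖ = (p:ℝ) ^ (-(b:ℤ) - c) := by
  rw [norm_inv, norm_mul, hx, hy, ← zpow_add₀ P_ne, ← zpow_neg]
  ring_nf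

lemma norm_head {x y : ℚ_[p]} {a b c : ℕ} (hb : 1 ≤ b)
    (hx : ‖x‖ = (p:ℝ) ^ (b:ℤ)) (hy : ‖y‖ = (p:ℝ) ^ (c:ℤ)) :
    ‖(p:ℚ_[p]) ^ (-(a:ℤ)) + (x * y)⁻¹‖ = (p:ℝ) ^ ((a:ℤ)) := by
  have h1 : ‖(p:ℚ_[p]) ^ (-(a:ℤ))‖ = (p:ℝ) ^ (a:ℤ) := by
    rw [Padic.norm_p_zpow, neg_neg]
  have h2 := norm_inv_mul (p := p) hx hy
  rw [norm_add_big, h1]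
  rw [h1, h2]
  exact Pz_lt (by omega)

lemma norm_bseq (hu1 : ∀ n, 1 ≤ u n) :
    ∀ d n, ‖bseq (p := p) u d n‖ = (p:ℝ) ^ (u n : ℤ) := by
  intro d
  induction d using Nat.strong_induction_on with
  | _ d ih =>
    match d with
    | 0 => intro n; rw [bseq, Padic.norm_p_zpow, neg_neg]
    | 1 =>
      intro n
      rw [bseq]
      exact norm_head (hu1 (n+1)) (ih 0 (by omega) (n+1)) (ih 0 (by omega) (n+2))
    | d+2 =>
      intro n
      rw [bseq]
      exact norm_head (hu1 (n+1)) (ih (d+1) (by omega) (n+1)) (ih d (by omega) (n+2))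

lemma bseq_ne (hu1 : ∀ n, 1 ≤ u n) (d n : ℕ) : bseq (p := p) u d n ≠ 0 := by
  have := norm_bseq (p := p) hu1 d n
  intro h
  rw [h, norm_zero] at this
  exact (Pz_pos (p := p) (u n : ℤ)).ne' this.symm

lemma inv_mul_sub_inv_mul {X Y X' Y' : ℚ_[p]} (hX : X ≠ 0) (hY : Y ≠ 0)
    (hX' : X' ≠ 0) (hY' : Y' ≠ 0) :
    (X * Y)⁻¹ - (X' * Y')⁻¹ =
      ((X' - X) * Y' + X * (Y' - Y)) * (X * Y)⁻¹ * (X' * Y')⁻¹ := by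
  field_simp
  ring

lemma ne_zero_of_norm_zpow {x : ℚ_[p]} {a : ℤ} (h : ‖x‖ = (p:ℝ)^a) : x ≠ 0 := by
  intro h0
  rw [h0, norm_zero] at h
  exact (Pz_pos (p := p) a).ne' h.symm

lemma diff_bound_step {X Y X' Y' : ℚ_[p]} {bx cy : ℕ} {EX EY T : ℤ}
    (hX : ‖X‖ = (p:ℝ) ^ (bx:ℤ)) (hX' : ‖X'‖ = (p:ℝ) ^ (bx:ℤ))
    (hY : ‖Y‖ = (p:ℝ) ^ (cy:ℤ)) (hY' : ‖Y'‖ = (p:ℝ) ^ (cy:ℤ))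
    (hdX : ‖X - X'‖ ≤ (p:ℝ) ^ EX) (hdY : ‖Y - Y'‖ ≤ (p:ℝ) ^ EY)
    (h1 : EX + cy ≤ T + 2*bx + 2*cy) (h2 : bx + EY ≤ T + 2*bx + 2*cy) :
    ‖(X * Y)⁻¹ - (X' * Y')⁻¹‖ ≤ (p:ℝ) ^ T := by
  have hX0 := ne_zero_of_norm_zpow hX
  have hX'0 := ne_zero_of_norm_zpow hX'
  have hY0 := ne_zero_of_norm_zpow hY
  have hY'0 := ne_zero_of_norm_zpow hY'
  rw [inv_mul_sub_inv_mul hX0 hY0 hX'0 hY'0, norm_mul, norm_mul]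
  have hA : ‖(X' - X) * Y' + X * (Y' - Y)‖ ≤ (p:ℝ) ^ (T + 2*bx + 2*cy) := by
    refine le_trans (Padic.nonarchimedean _ _) (max_le ?_ ?_)
    · rw [norm_mul, norm_sub_rev, hY']
      calc ‖X - X'‖ * (p:ℝ)^(cy:ℤ) ≤ (p:ℝ)^EX * (p:ℝ)^(cy:ℤ) := by
            exact mul_le_mul_of_nonneg_right hdX (Pz_pos _).le
        _ = (p:ℝ)^(EX + cy) := by rw [← zpow_add₀ P_ne]
        _ ≤ _ := Pz_le h1
    · rw [norm_mul, hX, norm_sub_rev]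
      calc (p:ℝ)^(bx:ℤ) * ‖Y - Y'‖ ≤ (p:ℝ)^(bx:ℤ) * (p:ℝ)^EY := by
            exact mul_le_mul_of_nonneg_left hdY (Pz_pos _).le
        _ = (p:ℝ)^((bx:ℤ) + EY) := by rw [← zpow_add₀ P_ne]
        _ ≤ _ := Pz_le h2
  have hi1 := norm_inv_mul (p := p) hX hY
  have hi2 := norm_inv_mul (p := p) hX' hY'
  rw [hi1, hi2]
  calc ‖(X' - X) * Y' + X * (Y' - Y)‖ * (p:ℝ)^(-(bx:ℤ) - cy) * (p:ℝ)^(-(bx:ℤ) - cy)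
      ≤ (p:ℝ)^(T + 2*bx + 2*cy) * (p:ℝ)^(-(bx:ℤ) - cy) * (p:ℝ)^(-(bx:ℤ) - cy) := by
        have hnn := (Pz_pos (p := p) (-(bx:ℤ) - cy)).le
        exact mul_le_mul_of_nonneg_right (mul_le_mul_of_nonneg_right hA hnn) hnn
    _ = (p:ℝ)^T := by
        rw [← zpow_add₀ P_ne, ← zpow_add₀ P_ne]
        ring_nf

lemma bseq_diff (hu1 : ∀ n, 1 ≤ u n) (hu : ∀ n, u n + 1 ≤ u (n+1)) :
    ∀ d n, ‖bseq (p := p) u (d+1) n - bseq u d n‖ ≤ (p:ℝ) ^ (-(u n : ℤ) - 1 - d) := by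
  have hnorm := norm_bseq (p := p) (u := u) hu1
  intro d
  induction d using Nat.strong_induction_on with
  | _ d ih =>
    match d with
    | 0 =>
      intro n
      show ‖bseq (p := p) u 1 n - bseq u 0 n‖ ≤ _
      have e : bseq (p := p) u 1 n - bseq u 0 n = (bseq u 0 (n+1) * bseq u 0 (n+2))⁻¹ := by
        rw [bseq_eq1 n, bseq_eq0 n]; ring
      rw [e, norm_inv_mul (p := p) (hnorm 0 (n+1)) (hnorm 0 (n+2))]
      have h1 := hu n
      exact Pz_le (by push_cast; omega)
    | 1 =>
      intro n
      show ‖bseq (p := p) u (0+2) n - bseq u 1 n‖ ≤ _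
      have e : bseq (p := p) u (0+2) n - bseq u 1 n
          = (bseq u 1 (n+1) * bseq u 0 (n+2))⁻¹ - (bseq u 0 (n+1) * bseq u 0 (n+2))⁻¹ := by
        rw [bseq_eq2 0 n, bseq_eq1 n]; ring
      rw [e]
      have h1 := hu n
      have h2 := hu (n+1)
      have h3 := hu1 (n+2)
      refine diff_bound_step (hnorm 1 (n+1)) (hnorm 0 (n+1)) (hnorm 0 (n+2)) (hnorm 0 (n+2))
        (ih 0 (by omega) (n+1)) (EY := -(u (n+2) : ℤ) - 1)
        (by simp only [sub_self, norm_zero]; exact (Pz_pos _).le)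
        (by push_cast; omega) (by push_cast; omega)
    | d+2 =>
      intro n
      show ‖bseq (p := p) u ((d+1)+2) n - bseq u (d+2) n‖ ≤ _
      have e : bseq (p := p) u ((d+1)+2) n - bseq u (d+2) n
          = (bseq u (d+2) (n+1) * bseq u (d+1) (n+2))⁻¹
            - (bseq u (d+1) (n+1) * bseq u (d) (n+2))⁻¹ := by
        rw [bseq_eq2 (d+1) n, bseq_eq2 d n]; ring
      rw [e]
      have h1 := hu n
      have h2 := hu (n+1)
      have h3 := hu1 (n+2)
      have hdX := ih (d+1) (by omega) (n+1)
      have hdY := ih d (by omega) (n+2)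
      refine diff_bound_step (hnorm (d+2) (n+1)) (hnorm (d+1) (n+1)) (hnorm (d+1) (n+2))
        (hnorm d (n+2)) hdX hdY (by push_cast; omega) (by push_cast; omega)

lemma bseq_tail (hu1 : ∀ n, 1 ≤ u n) (hu : ∀ n, u n + 1 ≤ u (n+1)) (n d : ℕ) :
    ∀ e, d ≤ e → ‖bseq (p := p) u e n - bseq u d n‖ ≤ (p:ℝ) ^ (-(u n : ℤ) - 1 - d) := by
  intro e
  induction e with
  | zero =>
    intro h
    have : d = 0 := Nat.le_zero.mp h
    subst this
    simp only [sub_self, norm_zero]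
    exact (Pz_pos _).le
  | succ e ihe =>
    intro h
    rcases Nat.lt_or_ge d (e+1) with hlt | hge
    · have hde : d ≤ e := by omega
      have h1 : ‖bseq (p := p) u (e+1) n - bseq u d n‖
          ≤ max ‖bseq (p := p) u (e+1) n - bseq u e n‖ ‖bseq (p := p) u e n - bseq u d n‖ := by
        have := Padic.nonarchimedean (p := p)
          (bseq u (e+1) n - bseq u e n) (bseq u e n - bseq u d n)
        simpa using this
      refine le_trans h1 (max_le ?_ (ihe hde))
      refine le_trans (bseq_diff hu1 hu e n) (Pz_le ?_)
      omega
    · have : d = e + 1 := by omega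
      subst this
      simp only [sub_self, norm_zero]
      exact (Pz_pos _).le

lemma exists_alpha (hu1 : ∀ n, 1 ≤ u n) (hu : ∀ n, u n + 1 ≤ u (n+1)) :
    ∃ α : ℕ → ℚ_[p],
      (∀ n, ‖α n‖ = (p:ℝ) ^ (u n : ℤ)) ∧
      (∀ n, α n = (p : ℚ_[p]) ^ (-(u n : ℤ)) + (α (n+1) * α (n+2))⁻¹) := by
  have hcauchy : ∀ n, CauchySeq (fun d => bseq (p := p) u d n) := by
    intro n
    apply cauchySeq_of_le_geometric (r := (p:ℝ)⁻¹) (C := (p:ℝ) ^ (-(u n : ℤ) - 1))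
    · rw [inv_lt_one_iff₀]; right; exact one_lt_P
    · intro d
      rw [dist_eq_norm, norm_sub_rev]
      refine le_trans (bseq_diff hu1 hu d n) (le_of_eq ?_)
      rw [inv_pow, ← zpow_natCast (p:ℝ) d, ← zpow_neg, ← zpow_add₀ P_ne, sub_eq_add_neg]
  have hlim : ∀ n, ∃ L, Filter.Tendsto (fun d => bseq (p := p) u d n) Filter.atTop (nhds L) :=
    fun n => cauchySeq_tendsto_of_complete (hcauchy n)
  choose α hα using hlim
  have htail : ∀ n d, ‖α n - bseq (p := p) u d n‖ ≤ (p:ℝ) ^ (-(u n : ℤ) - 1 - d) := by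
    intro n d
    have hT : Filter.Tendsto (fun e => ‖bseq (p := p) u e n - bseq u d n‖)
        Filter.atTop (nhds ‖α n - bseq (p := p) u d n‖) :=
      ((hα n).sub tendsto_const_nhds).norm
    refine le_of_tendsto hT ?_
    filter_upwards [Filter.eventually_ge_atTop d] with e he
    exact bseq_tail hu1 hu n d e he
  have hαnorm : ∀ n, ‖α n‖ = (p:ℝ) ^ (u n : ℤ) := by
    intro n
    have e : α n = bseq (p := p) u 0 n + (α n - bseq u 0 n) := by ring
    rw [e, norm_add_big, norm_bseq hu1 0 n]
    rw [norm_bseq hu1 0 n]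
    refine lt_of_le_of_lt (htail n 0) (Pz_lt ?_)
    have := hu1 n
    omega
  have hαne : ∀ n, α n ≠ 0 := fun n => ne_zero_of_norm_zpow (hαnorm n)
  refine ⟨α, hαnorm, fun n => ?_⟩
  have t1 : Filter.Tendsto (fun d => bseq (p := p) u (d+2) n) Filter.atTop (nhds (α n)) :=
    (hα n).comp (Filter.tendsto_add_atTop_nat 2)
  have t2 : Filter.Tendsto (fun d => bseq (p := p) u (d+2) n) Filter.atTop
      (nhds ((p : ℚ_[p]) ^ (-(u n : ℤ)) + (α (n+1) * α (n+2))⁻¹)) := by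
    have hmul : Filter.Tendsto (fun d => bseq (p := p) u (d+1) (n+1) * bseq u d (n+2))
        Filter.atTop (nhds (α (n+1) * α (n+2))) :=
      (((hα (n+1)).comp (Filter.tendsto_add_atTop_nat 1))).mul (hα (n+2))
    have hne : α (n+1) * α (n+2) ≠ 0 := mul_ne_zero (hαne (n+1)) (hαne (n+2))
    have hinv := hmul.inv₀ hne
    have := (tendsto_const_nhds (x := (p : ℚ_[p]) ^ (-(u n : ℤ)))
      (f := Filter.atTop (α := ℕ))).add hinv
    refine Filter.Tendsto.congr (fun d => ?_) this
    rw [bseq_eq2 d n]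
  exact tendsto_nhds_unique t1 t2

lemma sdef (hodd : Odd p) (x : ℚ_[p]) :
    ∃ r : ℚ, (∃ (z : ℤ) (k : ℕ), r = (z : ℚ) / (p : ℚ) ^ k) ∧ |r| < (p : ℚ) / 2 ∧
      ‖x - (r : ℚ_[p])‖ < 1 := by
  have hp2 : (2:ℚ) < p := by
    have h2 : p ≠ 2 := by rintro rfl; exact (by norm_num : ¬ Odd 2) hodd
    have := hpf.out.two_le
    exact_mod_cast by omega
  set k : ℕ := (-x.valuation).toNat with hk
  have hxk : ‖x * (p:ℚ_[p]) ^ k‖ ≤ 1 := by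
    by_cases hx : x = 0
    · simp [hx]
    · rw [norm_mul, Padic.norm_eq_zpow_neg_valuation hx, Padic.norm_p_pow,
        ← zpow_add₀ P_ne]
      have hle : -x.valuation ≤ (k : ℤ) := Int.self_le_toNat _
      calc (p:ℝ) ^ (-x.valuation + -(k:ℤ)) ≤ (p:ℝ) ^ (0:ℤ) := Pz_le (by omega)
        _ = 1 := zpow_zero _
  set z : ℤ_[p] := ⟨x * (p:ℚ_[p]) ^ k, hxk⟩ with hz
  set N : ℕ := z.appr (k+1) with hN
  have hspec := PadicInt.appr_spec (k+1) z
  have hNnorm : ‖x * (p:ℚ_[p]) ^ k - (N : ℚ_[p])‖ ≤ (p:ℝ) ^ (-(k+1) : ℤ) := by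
    rw [Ideal.mem_span_singleton'] at hspec
    obtain ⟨a, ha⟩ := hspec
    have : x * (p:ℚ_[p]) ^ k - (N : ℚ_[p]) = ((z - N : ℤ_[p]) : ℚ_[p]) := by
      push_cast [hz]
      rfl
    rw [this, ← PadicInt.norm_def, ← ha, norm_mul]
    calc ‖a‖ * ‖(p:ℤ_[p]) ^ (k+1)‖ ≤ 1 * ‖(p:ℤ_[p]) ^ (k+1)‖ :=
          mul_le_mul_of_nonneg_right a.norm_le_one (norm_nonneg _)
      _ = (p:ℝ) ^ (-(k+1) : ℤ) := by rw [one_mul, PadicInt.norm_p_pow]; norm_num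
  set w : ℤ := Int.bmod N (p ^ (k+1)) with hw
  have hm0 : 0 < p ^ (k+1) := Nat.pow_pos hpf.out.pos
  obtain ⟨M, hM⟩ := hodd.pow (n := k+1)
  have hwN : ((p:ℤ) ^ (k+1)) ∣ w - N := by
    have := Int.dvd_bmod_sub_self (x := (N:ℤ)) (m := p ^ (k+1))
    push_cast at this ⊢
    exact_mod_cast this
  have hwnorm : ‖((N : ℤ) : ℚ_[p]) - ((w : ℤ) : ℚ_[p])‖ ≤ (p:ℝ) ^ (-(k+1) : ℤ) := by
    have h1 : ‖(((N : ℤ) - w : ℤ) : ℚ_[p])‖ ≤ (p:ℝ) ^ (-((k+1):ℕ) : ℤ) := by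
      rw [Padic.norm_int_le_pow_iff_dvd, show (N:ℤ) - w = -(w - N) by ring]
      exact dvd_neg.mpr hwN
    push_cast at h1 ⊢
    exact h1
  have hMz : ((p ^ (k+1) : ℕ) : ℤ) = 2 * (M:ℤ) + 1 := by exact_mod_cast hM
  have hb1 := Int.bmod_le (x := (N:ℤ)) hm0
  have hb2 := Int.le_bmod (x := (N:ℤ)) hm0
  rw [← hw] at hb1 hb2
  have habs : |(w:ℚ)| ≤ (M:ℚ) := by
    have : |w| ≤ (M:ℤ) := abs_le.mpr ⟨by omega, by omega⟩
    exact_mod_cast this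
  refine ⟨(w:ℚ)/(p:ℚ)^k, ⟨w, k, rfl⟩, ?_, ?_⟩
  · have hpk : (0:ℚ) < (p:ℚ)^k := by positivity
    rw [abs_div, abs_of_pos hpk, div_lt_div_iff₀ hpk (by norm_num : (0:ℚ) < 2)]
    have hMq : ((2 * M + 1 : ℕ) : ℚ) = (p:ℚ)^(k+1) := by
      rw [hM.symm]
      push_cast
      ring
    calc |(w:ℚ)| * 2 ≤ (M:ℚ) * 2 := by linarith
      _ < 2 * M + 1 := by linarith
      _ = (p:ℚ)^(k+1) := by exact_mod_cast hMq
      _ = (p:ℚ) * (p:ℚ)^k := by ring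
  · have hpne : ((p:ℚ_[p])) ≠ 0 := by
      exact_mod_cast Nat.cast_ne_zero.mpr hpf.out.ne_zero
    have hpkne : ((p:ℚ_[p]))^k ≠ 0 := pow_ne_zero _ hpne
    have hcast : (((w:ℚ)/(p:ℚ)^k : ℚ) : ℚ_[p]) = ((w:ℤ) : ℚ_[p]) / (p:ℚ_[p])^k := by
      push_cast
      ring
    rw [hcast]
    have he : x - ((w:ℤ) : ℚ_[p]) / (p:ℚ_[p])^k
        = (x * (p:ℚ_[p])^k - ((w:ℤ) : ℚ_[p])) / (p:ℚ_[p])^k := by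
      field_simp
    rw [he, norm_div]
    have hcomb : ‖x * (p:ℚ_[p])^k - ((w:ℤ) : ℚ_[p])‖ ≤ (p:ℝ) ^ (-(k+1) : ℤ) := by
      have h1 := Padic.nonarchimedean
        (x * (p:ℚ_[p])^k - ((N:ℤ) : ℚ_[p])) (((N:ℤ) : ℚ_[p]) - ((w:ℤ) : ℚ_[p]))
      have h2 : x * (p:ℚ_[p])^k - ((w:ℤ) : ℚ_[p])
          = (x * (p:ℚ_[p])^k - ((N:ℤ) : ℚ_[p])) + (((N:ℤ) : ℚ_[p]) - ((w:ℤ) : ℚ_[p])) := by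
        ring
      rw [h2]
      refine le_trans h1 (max_le ?_ hwnorm)
      have : ((N:ℤ) : ℚ_[p]) = ((N:ℕ) : ℚ_[p]) := by push_cast; ring
      rw [this]
      exact hNnorm
    rw [Padic.norm_p_pow]
    calc ‖x * (p:ℚ_[p])^k - ((w:ℤ) : ℚ_[p])‖ / (p:ℝ) ^ (-(k:ℤ))
        ≤ (p:ℝ) ^ (-(k+1) : ℤ) / (p:ℝ) ^ (-(k:ℤ)) := by
          gcongr
      _ = (p:ℝ) ^ (-1 : ℤ) := by
          rw [← zpow_sub₀ P_ne]
          norm_num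
      _ < 1 := by
          have := Pz_lt (p := p) (a := -1) (b := 0) (by norm_num)
          simpa using this

lemma norm_comb {x y z w : ℚ_[p]} :
    ‖-x * y - z * w‖ ≤ max (‖x‖ * ‖y‖) (‖z‖ * ‖w‖) := by
  calc ‖-x * y - z * w‖ = ‖(-(x * y)) + (-(z * w))‖ := by ring_nf
    _ ≤ max ‖-(x * y)‖ ‖-(z * w)‖ := Padic.nonarchimedean _ _
    _ = max (‖x‖ * ‖y‖) (‖z‖ * ‖w‖) := by rw [norm_neg, norm_neg, norm_mul, norm_mul]

lemma Wrec (α : ℕ → ℚ_[p]) (hα0 : ∀ n, α n ≠ 0) (aa : ℕ → ℚ_[p])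
    (haa : ∀ n, aa n = α n - (α (n+1) * α (n+2))⁻¹)
    (W : ℕ → ℚ_[p])
    (hrec : ∀ n, W (n+3) = aa (n+1) * W (n+2) + W n)
    (hbase : W 2 = -(α 1 * α 2)⁻¹ * W 1 - (α 1)⁻¹ * W 0) :
    ∀ n, W (n+2) = -(α (n+1) * α (n+2))⁻¹ * W (n+1) - (α (n+1))⁻¹ * W n := by
  intro n
  induction n with
  | zero => exact hbase
  | succ n ih =>
    have h3 := hrec n
    rw [haa (n+1)] at h3
    simp only [show n+1+1 = n+2 from rfl, show n+1+2 = n+3 from rfl] at h3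
    have e1 := hα0 (n+1)
    have e2 := hα0 (n+2)
    have e3 := hα0 (n+3)
    have haux : α (n+1) * W (n+2) = -(α (n+2))⁻¹ * W (n+1) - W n := by
      rw [ih]
      field_simp
    rw [show n+1+2 = n+3 from rfl, show n+1+1 = n+2 from rfl, h3]
    linear_combination haux

lemma Wsmall (α : ℕ → ℚ_[p]) {u : ℕ → ℕ}
    (hαn : ∀ n, ‖α n‖ = (p:ℝ) ^ (u n : ℤ)) (hu1 : ∀ n, 1 ≤ u n)
    (W : ℕ → ℚ_[p])
    (hS : ∀ n, W (n+2) = -(α (n+1) * α (n+2))⁻¹ * W (n+1) - (α (n+1))⁻¹ * W n)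
    (h0 : ‖W 0‖ ≤ 1) (h1 : ‖W 1‖ ≤ 1) :
    ∀ n, ‖W n‖ ≤ 1 ∧ ‖W (n+1)‖ ≤ 1 := by
  intro n
  induction n with
  | zero => exact ⟨h0, h1⟩
  | succ n ih =>
    refine ⟨ih.2, ?_⟩
    rw [hS n]
    refine le_trans norm_comb (max_le ?_ ?_)
    · rw [norm_inv_mul (p := p) (hαn (n+1)) (hαn (n+2))]
      calc (p:ℝ) ^ (-(u (n+1) : ℤ) - u (n+2)) * ‖W (n+1)‖
          ≤ 1 * 1 := by
            refine mul_le_mul ?_ ih.2 (norm_nonneg _) (by norm_num)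
            calc (p:ℝ) ^ (-(u (n+1) : ℤ) - u (n+2)) ≤ (p:ℝ) ^ (0:ℤ) :=
                Pz_le (by have := hu1 (n+1); have := hu1 (n+2); omega)
              _ = 1 := zpow_zero _
        _ = 1 := by norm_num
    · rw [norm_inv, hαn (n+1), ← zpow_neg]
      calc (p:ℝ) ^ (-(u (n+1) : ℤ)) * ‖W n‖
          ≤ 1 * 1 := by
            refine mul_le_mul ?_ ih.1 (norm_nonneg _) (by norm_num)
            calc (p:ℝ) ^ (-(u (n+1) : ℤ)) ≤ (p:ℝ) ^ (0:ℤ) :=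
                Pz_le (by have := hu1 (n+1); omega)
              _ = 1 := zpow_zero _
        _ = 1 := by norm_num

lemma Wbound (α : ℕ → ℚ_[p]) {u : ℕ → ℕ}
    (hαn : ∀ n, ‖α n‖ = (p:ℝ) ^ (u n : ℤ)) (hu1 : ∀ n, 1 ≤ u n)
    (W : ℕ → ℚ_[p])
    (hS : ∀ n, W (n+2) = -(α (n+1) * α (n+2))⁻¹ * W (n+1) - (α (n+1))⁻¹ * W n)
    (h0 : ‖W 0‖ ≤ 1) (h1 : ‖W 1‖ ≤ 1) :
    ∀ n, ‖W (n+2)‖ ≤ (p:ℝ) ^ (-(u (n+1) : ℤ)) := by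
  intro n
  have hsm := Wsmall (p := p) α hαn hu1 W hS h0 h1
  rw [hS n]
  refine le_trans norm_comb (max_le ?_ ?_)
  · rw [norm_inv_mul (p := p) (hαn (n+1)) (hαn (n+2))]
    calc (p:ℝ) ^ (-(u (n+1) : ℤ) - u (n+2)) * ‖W (n+1)‖
        ≤ (p:ℝ) ^ (-(u (n+1) : ℤ) - u (n+2)) * 1 :=
          mul_le_mul_of_nonneg_left (hsm (n+1)).1 (Pz_pos _).le
      _ = (p:ℝ) ^ (-(u (n+1) : ℤ) - u (n+2)) := by norm_num
      _ ≤ _ := Pz_le (by have := hu1 (n+2); omega)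
  · rw [norm_inv, hαn (n+1), ← zpow_neg]
    calc (p:ℝ) ^ (-(u (n+1) : ℤ)) * ‖W n‖
        ≤ (p:ℝ) ^ (-(u (n+1) : ℤ)) * 1 :=
          mul_le_mul_of_nonneg_left (hsm n).1 (Pz_pos _).le
      _ ≤ _ := by norm_num

lemma exists_mcf (hodd : Odd p) (u : ℕ → ℕ) (hu1 : ∀ n, 1 ≤ u n)
    (hu : ∀ n, u n + 1 ≤ u (n+1)) :
    ∃ m : PMCF p, m.al 0 ≠ 0 ∧ ‖m.al 0‖ = (p:ℝ) ^ (u 0 : ℤ) ∧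
      ∀ n, max ‖PMCF.Va m n‖ ‖PMCF.Vb m n‖ ≤ (p:ℝ) ^ (-(u (n+1) : ℤ)) := by
  classical
  obtain ⟨α, hαn, hid⟩ := exists_alpha (p := p) hu1 hu
  have hαne : ∀ n, α n ≠ 0 := fun n => ne_zero_of_norm_zpow (hαn n)
  have hp2q : (2:ℚ) < p := by
    have h2 : p ≠ 2 := by rintro rfl; exact (by norm_num : ¬ Odd 2) hodd
    have := hpf.out.two_le
    exact_mod_cast by omega
  set sf : ℚ_[p] → ℚ := fun x =>
    if h : ∃ n, α n = x then ((p:ℚ) ^ (u h.choose))⁻¹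
    else if ‖x‖ < 1 then 0 else (sdef hodd x).choose with hsf
  have hcast : ∀ k : ℕ, ((((p:ℚ) ^ k)⁻¹ : ℚ) : ℚ_[p]) = (p : ℚ_[p]) ^ (-(k:ℤ)) := by
    intro k
    rw [zpow_neg, zpow_natCast]
    push_cast
    ring
  have hsα : ∀ n, sf (α n) = ((p:ℚ) ^ (u n))⁻¹ := by
    intro n
    have h : ∃ m, α m = α n := ⟨n, rfl⟩
    simp only [hsf]
    rw [dif_pos h]
    have hch : α h.choose = α n := h.choose_spec
    have h1 : (p:ℝ) ^ (u h.choose : ℤ) = (p:ℝ) ^ (u n : ℤ) := by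
      rw [← hαn, ← hαn, hch]
    have h2 : (u h.choose : ℤ) = (u n : ℤ) :=
      zpow_right_injective₀ P_pos one_lt_P.ne' h1
    have h3 : u h.choose = u n := by exact_mod_cast h2
    rw [h3]
  have hβnr : ∀ n : ℕ, ¬ (∃ m, α m = (α (n+1))⁻¹) := by
    rintro n ⟨m, hm⟩
    have h1 : (p:ℝ) ^ (u m : ℤ) = (p:ℝ) ^ (-(u (n+1) : ℤ)) := by
      rw [← hαn m, hm, norm_inv, hαn (n+1), ← zpow_neg]
    have h2 : (u m : ℤ) = -(u (n+1) : ℤ) :=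
      zpow_right_injective₀ P_pos one_lt_P.ne' h1
    have := hu1 m
    have := hu1 (n+1)
    omega
  have hβlt : ∀ n : ℕ, ‖(α (n+1))⁻¹‖ < 1 := by
    intro n
    rw [norm_inv, hαn (n+1), ← zpow_neg]
    calc (p:ℝ) ^ (-(u (n+1) : ℤ)) < (p:ℝ) ^ (0:ℤ) :=
        Pz_lt (by have := hu1 (n+1); omega)
      _ = 1 := zpow_zero _
  have hsβ : ∀ n, sf ((α (n+1))⁻¹) = 0 := by
    intro n
    simp only [hsf]
    rw [dif_neg (hβnr n), if_pos (hβlt n)]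
  have hxid : ∀ n, α n - (p : ℚ_[p]) ^ (-(u n : ℤ)) = (α (n+1) * α (n+2))⁻¹ := by
    intro n
    rw [hid n]
    ring
  have hsint : ∀ x : ℚ_[p], ∃ (z : ℤ) (k : ℕ), sf x = (z : ℚ) / (p : ℚ) ^ k := by
    intro x
    simp only [hsf]
    split_ifs with h1 h2
    · exact ⟨1, u h1.choose, by rw [Int.cast_one, one_div]⟩
    · exact ⟨0, 0, by norm_num⟩
    · exact (sdef hodd x).choose_spec.1
  have hsbound : ∀ x : ℚ_[p], |sf x| < (p : ℚ) / 2 := by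
    intro x
    simp only [hsf]
    split_ifs with h1 h2
    · have h0 : (0:ℚ) < (p:ℚ) ^ (u h1.choose) := by positivity
      rw [abs_inv, abs_of_pos h0]
      have hle : (1:ℚ) ≤ (p:ℚ) ^ (u h1.choose) := one_le_pow₀ (by linarith)
      have : ((p:ℚ) ^ (u h1.choose))⁻¹ ≤ 1 := by
        rw [inv_le_one_iff₀]
        right
        exact hle
      linarith
    · rw [abs_zero]
      linarith
    · exact (sdef hodd x).choose_spec.2.1
  have hsclose : ∀ x : ℚ_[p], ‖x - ((sf x : ℚ) : ℚ_[p])‖ < 1 := by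
    intro x
    simp only [hsf]
    split_ifs with h1 h2
    · have hx : α h1.choose = x := h1.choose_spec
      rw [hcast]
      have key : ‖α h1.choose - (p : ℚ_[p]) ^ (-(u h1.choose : ℤ))‖ < 1 := by
        rw [hxid h1.choose, norm_inv_mul (p := p) (hαn _) (hαn _)]
        calc (p:ℝ) ^ (-(u (h1.choose+1) : ℤ) - (u (h1.choose+2) : ℤ)) < (p:ℝ) ^ (0:ℤ) :=
            Pz_lt (by have := hu1 (h1.choose+1); have := hu1 (h1.choose+2); omega)
          _ = 1 := zpow_zero _
      rw [hx] at key
      exact key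
    · rw [Rat.cast_zero, sub_zero]
      exact h2
    · exact (sdef hodd x).choose_spec.2.2
  have hne' : ∀ n, (α (n+1))⁻¹ - ((sf ((α (n+1))⁻¹) : ℚ) : ℚ_[p]) ≠ 0 := by
    intro n
    rw [hsβ n, Rat.cast_zero, sub_zero]
    exact inv_ne_zero (hαne (n+1))
  have hral' : ∀ n, α (n+1) = ((α (n+1))⁻¹ - ((sf ((α (n+1))⁻¹) : ℚ) : ℚ_[p]))⁻¹ := by
    intro n
    rw [hsβ n, Rat.cast_zero, sub_zero, inv_inv]
  have hrbe' : ∀ n, (α (n+1+1))⁻¹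
      = (α n - ((sf (α n) : ℚ) : ℚ_[p])) * ((α (n+1))⁻¹ - ((sf ((α (n+1))⁻¹) : ℚ) : ℚ_[p]))⁻¹ := by
    intro n
    rw [hsβ n, hsα n, hcast, Rat.cast_zero, sub_zero, inv_inv, hxid n,
      show n+1+1 = n+2 from rfl, mul_inv]
    have e1 := hαne (n+1)
    have e2 := hαne (n+2)
    field_simp
  refine ⟨⟨sf, hsint, hsbound, hsclose, α, fun k => (α (k+1))⁻¹, hne', hral', hrbe'⟩,
    hαne 0, hαn 0, ?_⟩
  set m : PMCF p :=
    (⟨sf, hsint, hsbound, hsclose, α, fun k => (α (k+1))⁻¹, hne', hral', hrbe'⟩ : PMCF p)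
    with hmdef
  have hma : ∀ n, PMCF.a m n = ((p:ℚ) ^ (u n))⁻¹ := fun n => hsα n
  have hmb : ∀ n, PMCF.b m n = 0 := by
    intro n
    cases n with
    | zero =>
      show sf ((α (0+1))⁻¹) = 0
      exact hsβ 0
    | succ k =>
      show sf (PMCF.be m (k+1)) = 0
      have : PMCF.be m (k+1) = (α (k+1+1))⁻¹ := rfl
      rw [this]
      exact hsβ (k+1)
  set Wa : ℕ → ℚ_[p] :=
    fun k => ((PMCF.C m k : ℚ) : ℚ_[p]) * α 0 - ((PMCF.A m k : ℚ) : ℚ_[p]) with hWa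
  set Wb : ℕ → ℚ_[p] :=
    fun k => ((PMCF.C m k : ℚ) : ℚ_[p]) * (α 1)⁻¹ - ((PMCF.B m k : ℚ) : ℚ_[p]) with hWb
  have haa : ∀ n, ((PMCF.a m n : ℚ) : ℚ_[p]) = α n - (α (n+1) * α (n+2))⁻¹ := by
    intro n
    rw [hma n, hcast (u n), ← hxid n]
    ring
  have hrecA : ∀ n, Wa (n+3) = ((PMCF.a m (n+1) : ℚ) : ℚ_[p]) * Wa (n+2) + Wa n := by
    intro n
    simp only [hWa]
    rw [show PMCF.A m (n+3) = PMCF.a m (n+1) * PMCF.A m (n+2)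
        + PMCF.b m (n+1) * PMCF.A m (n+1) + PMCF.A m n from rfl,
      show PMCF.C m (n+3) = PMCF.a m (n+1) * PMCF.C m (n+2)
        + PMCF.b m (n+1) * PMCF.C m (n+1) + PMCF.C m n from rfl,
      hmb (n+1)]
    push_cast
    ring
  have hrecB : ∀ n, Wb (n+3) = ((PMCF.a m (n+1) : ℚ) : ℚ_[p]) * Wb (n+2) + Wb n := by
    intro n
    simp only [hWb]
    rw [show PMCF.B m (n+3) = PMCF.a m (n+1) * PMCF.B m (n+2)
        + PMCF.b m (n+1) * PMCF.B m (n+1) + PMCF.B m n from rfl,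
      show PMCF.C m (n+3) = PMCF.a m (n+1) * PMCF.C m (n+2)
        + PMCF.b m (n+1) * PMCF.C m (n+1) + PMCF.C m n from rfl,
      hmb (n+1)]
    push_cast
    ring
  have hbaseA : Wa 2 = -(α 1 * α 2)⁻¹ * Wa 1 - (α 1)⁻¹ * Wa 0 := by
    simp only [hWa]
    rw [show PMCF.A m 2 = PMCF.a m 0 from rfl, show PMCF.A m 1 = 1 from rfl,
      show PMCF.A m 0 = 0 from rfl, show PMCF.C m 2 = 1 from rfl,
      show PMCF.C m 1 = 0 from rfl, show PMCF.C m 0 = 0 from rfl]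
    push_cast
    rw [haa 0]
    ring
  have hbaseB : Wb 2 = -(α 1 * α 2)⁻¹ * Wb 1 - (α 1)⁻¹ * Wb 0 := by
    simp only [hWb]
    rw [show PMCF.B m 2 = PMCF.b m 0 from rfl, show PMCF.B m 1 = 0 from rfl,
      show PMCF.B m 0 = 1 from rfl, show PMCF.C m 2 = 1 from rfl,
      show PMCF.C m 1 = 0 from rfl, show PMCF.C m 0 = 0 from rfl,
      hmb 0]
    push_cast
    ring
  have hSA := Wrec (p := p) α hαne (fun n => ((PMCF.a m n : ℚ) : ℚ_[p])) haa Wa hrecA hbaseA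
  have hSB := Wrec (p := p) α hαne (fun n => ((PMCF.a m n : ℚ) : ℚ_[p])) haa Wb hrecB hbaseB
  have hWa0 : ‖Wa 0‖ ≤ 1 := by
    have e : Wa 0 = -1 * 0 := by
      simp only [hWa]
      rw [show PMCF.C m 0 = 0 from rfl, show PMCF.A m 0 = 0 from rfl]
      push_cast
      ring
    rw [e]
    norm_num
  have hWa1 : ‖Wa 1‖ ≤ 1 := by
    have e : Wa 1 = -1 := by
      simp only [hWa]
      rw [show PMCF.C m 1 = 0 from rfl, show PMCF.A m 1 = 1 from rfl]
      push_cast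
      ring
    rw [e, norm_neg, norm_one]
  have hWb0 : ‖Wb 0‖ ≤ 1 := by
    have e : Wb 0 = -1 := by
      simp only [hWb]
      rw [show PMCF.C m 0 = 0 from rfl, show PMCF.B m 0 = 1 from rfl]
      push_cast
      ring
    rw [e, norm_neg, norm_one]
  have hWb1 : ‖Wb 1‖ ≤ 1 := by
    have e : Wb 1 = -1 * 0 := by
      simp only [hWb]
      rw [show PMCF.C m 1 = 0 from rfl, show PMCF.B m 1 = 0 from rfl]
      push_cast
      ring
    rw [e]
    norm_num
  have hbA := Wbound (p := p) α hαn hu1 Wa hSA hWa0 hWa1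
  have hbB := Wbound (p := p) α hαn hu1 Wb hSB hWb0 hWb1
  intro n
  have hVa : PMCF.Va m n = Wa (n+2) := by rw [hWa]; rfl
  have hVb : PMCF.Vb m n = Wb (n+2) := by rw [hWb]; rfl
  rw [hVa, hVb]
  exact max_le (hbA n) (hbB n)

end PmcfProof

/-- For any `f : ℕ → ℕ` there are infinitely many pairs `(α, β) ∈ ℚ_p²` with infinite
`p`-adic MCF expansion satisfying `min{ν_p(C_n α - A_n), ν_p(C_n β - B_n)} ≥ f(n)`
for every `n` (stated via the norm). -/
theorem pmcf_infinitely_many_good_pairs (p : ℕ) [Fact (Nat.Prime p)] (hp : Odd p)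
    (f : ℕ → ℕ) :
    {q : ℚ_[p] × ℚ_[p] | ∃ m : PMCF p, m.al 0 = q.1 ∧ m.be 0 = q.2 ∧
      ∀ n, max ‖PMCF.Va m n‖ ‖PMCF.Vb m n‖ ≤ (p : ℝ) ^ (-((f n : ℤ)))}.Infinite := by
  classical
  set u : ℕ → ℕ → ℕ := fun j n => (∑ k ∈ Finset.range (n+1), f k) + n + 1 + j with hudef
  have hu1 : ∀ j n, 1 ≤ u j n := by
    intro j n
    simp only [hudef]
    omega
  have hu : ∀ j n, u j n + 1 ≤ u j (n+1) := by
    intro j n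
    simp only [hudef]
    rw [Finset.sum_range_succ (f := f) (n := n+1)]
    omega
  have hex := fun j => PmcfProof.exists_mcf hp (u j) (hu1 j) (hu j)
  choose m hm0 hmn hmb using hex
  apply Set.infinite_of_injective_forall_mem
    (f := fun j : ℕ => ((m j).al 0, (m j).be 0))
  · intro j1 j2 h
    have h1 : (m j1).al 0 = (m j2).al 0 := congrArg Prod.fst h
    have h2 : (p:ℝ) ^ (u j1 0 : ℤ) = (p:ℝ) ^ (u j2 0 : ℤ) := by
      rw [← hmn j1, ← hmn j2, h1]
    have h3 : (u j1 0 : ℤ) = (u j2 0 : ℤ) :=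
      zpow_right_injective₀ PmcfProof.P_pos PmcfProof.one_lt_P.ne' h2
    simp only [hudef, Finset.sum_range_one] at h3
    omega
  · intro j
    refine ⟨m j, rfl, rfl, fun n => ?_⟩
    refine le_trans (hmb j n) (PmcfProof.Pz_le ?_)
    have hfn : f n ≤ ∑ k ∈ Finset.range (n+1+1), f k :=
      Finset.single_le_sum (fun i _ => Nat.zero_le (f i)) (Finset.mem_range.mpr (by omega))
    have hle : f n ≤ u j (n+1) := by
      simp only [hudef]
      omega
    omega
end

section
/- Let (α, β) ∈ ℚ_p² have a p-adic MCF expansion of length ≥ n, and let (α', β') ∈ ℚ_p². If max{|α - α'|_p, |β - β'|_p} < p^{-2K_n}, then the MCF of (α', β') has length ≥ n and a_i = a_i', b_i = b_i' for i = 0, …, n. -/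
section LocalConstancyAux

variable {p : ℕ} [Fact (Nat.Prime p)]

lemma my_norm_eq_of_sub_lt {x y : ℚ_[p]} (h : ‖x - y‖ < ‖x‖) : ‖y‖ = ‖x‖ := by
  have hne : ‖y - x‖ ≠ ‖x‖ := by rw [norm_sub_rev]; exact ne_of_lt h
  have : y = (y - x) + x := by ring
  rw [this, Padic.add_eq_max_of_ne hne, norm_sub_rev]
  exact max_eq_right h.le

lemma my_rat_zero {q : ℚ} (z : ℤ) (m : ℕ) (hq : q = (z : ℚ) / (p : ℚ) ^ m)
    (hb : |q| < p) (hn : ‖(q : ℚ_[p])‖ < 1) : q = 0 := by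
  by_contra h0
  have hp1 : 1 < (p : ℚ) := by exact_mod_cast (Fact.out : p.Prime).one_lt
  have hp0 : (0:ℚ) < (p:ℚ) := by linarith
  have hpm : ((p : ℚ)) ^ m ≠ 0 := by positivity
  have hz : z ≠ 0 := by rintro rfl; simp at hq; exact h0 hq
  have hv1 : 1 ≤ padicValRat p q := by
    by_contra hle
    push_neg at hle
    have h0le : 0 ≤ -padicValRat p q := by omega
    have : (1 : ℚ) ≤ (p : ℚ) ^ (-padicValRat p q) := one_le_zpow₀ hp1.le h0le
    have hnq : ‖(q : ℚ_[p])‖ = ((p : ℚ) ^ (-padicValRat p q) : ℚ) := by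
      rw [Padic.eq_padicNorm, padicNorm.eq_zpow_of_nonzero h0]
    rw [hnq] at hn
    exact absurd hn (by exact_mod_cast not_lt.mpr this)
  have hmul : q * (p : ℚ) ^ m = (z : ℚ) := by rw [hq]; field_simp
  have hval : padicValRat p (z : ℚ) = padicValRat p q + m := by
    rw [← hmul, padicValRat.mul h0 hpm]
    congr 1
    rw [show ((p:ℚ)^m) = ((p:ℚ))^m from rfl, padicValRat.pow (p:ℚ),
      padicValRat.self (Fact.out : p.Prime).one_lt]
    ring
  have hvi : (m + 1 : ℤ) ≤ (padicValInt p z : ℤ) := by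
    rw [← padicValRat.of_int, hval]; omega
  have hdvd : (p : ℤ) ^ (m + 1) ∣ z := by
    rw [padicValInt_dvd_iff]; right; exact_mod_cast hvi
  have habs : (p : ℤ) ^ (m + 1) ≤ |z| := Int.le_of_dvd (abs_pos.mpr hz) ((dvd_abs _ _).mpr hdvd)
  have habsq : ((p : ℚ)) ^ (m + 1) ≤ |(z : ℚ)| := by
    rw [← Int.cast_abs]; exact_mod_cast habs
  have : |q| = |(z : ℚ)| / (p : ℚ) ^ m := by rw [hq, abs_div, abs_of_pos (pow_pos hp0 m)]
  rw [this] at hb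
  have : |(z:ℚ)| < (p:ℚ) ^ (m+1) := by
    rw [div_lt_iff₀ (by positivity)] at hb
    calc |(z:ℚ)| < p * (p:ℚ)^m := hb
    _ = (p:ℚ)^(m+1) := by ring
  linarith

lemma my_s_loc (S : BrowkinS p) {x y : ℚ_[p]} (h : ‖x - y‖ < 1) : S.s x = S.s y := by
  have hd : ‖((S.s x - S.s y : ℚ) : ℚ_[p])‖ < 1 := by
    have : ((S.s x - S.s y : ℚ) : ℚ_[p]) =
        (((S.s x : ℚ_[p]) - x) + (x - y)) + (y - (S.s y : ℚ_[p])) := by push_cast; ring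
    rw [this]
    refine lt_of_le_of_lt (Padic.nonarchimedean _ _)
      (max_lt (lt_of_le_of_lt (Padic.nonarchimedean _ _) (max_lt ?_ h)) (S.s_close y))
    rw [norm_sub_rev]; exact S.s_close x
  obtain ⟨z1, k1, h1⟩ := S.s_int x
  obtain ⟨z2, k2, h2⟩ := S.s_int y
  have hp0 : (0:ℚ) < p := by exact_mod_cast (Fact.out : p.Prime).pos
  have hb : |S.s x - S.s y| < p := by
    calc |S.s x - S.s y| ≤ |S.s x| + |S.s y| := abs_sub _ _
    _ < p/2 + p/2 := add_lt_add (S.s_bound x) (S.s_bound y)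
    _ = p := by ring
  have := my_rat_zero (z1 * p ^ k2 - z2 * p ^ k1) (k1 + k2)
    (by rw [h1, h2]; field_simp; push_cast; ring) hb hd
  linarith [this]

lemma my_val (S : BrowkinS p) {v α : ℚ_[p]} (hv0 : v ≠ 0) (hv1 : ‖v‖ < 1) (hα : α = v⁻¹) :
    S.s α ≠ 0 ∧ ‖v‖ = (p : ℝ) ^ (padicValRat p (S.s α)) ∧ padicValRat p (S.s α) ≤ -1 := by
  have hpR : (1:ℝ) < (p:ℝ) := by exact_mod_cast (Fact.out : p.Prime).one_lt
  have hvpos : 0 < ‖v‖ := norm_pos_iff.mpr hv0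
  have h1 : 1 < ‖α‖ := by
    rw [hα, norm_inv]; exact (one_lt_inv₀ hvpos).mpr hv1
  have h2 : ‖α - (S.s α : ℚ_[p])‖ < ‖α‖ := (S.s_close α).trans h1
  have h3 : ‖((S.s α : ℚ) : ℚ_[p])‖ = ‖α‖ := my_norm_eq_of_sub_lt h2
  have h4 : S.s α ≠ 0 := by
    intro h; rw [h] at h3; simp at h3; rw [← h3] at h1; norm_num at h1
  have h5 : ‖((S.s α : ℚ) : ℚ_[p])‖ = (p:ℝ) ^ (-padicValRat p (S.s α)) := by
    rw [Padic.eq_padicNorm, padicNorm.eq_zpow_of_nonzero h4]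
    push_cast; ring
  have h6 : ‖v‖ = (p:ℝ) ^ (padicValRat p (S.s α)) := by
    have hinv : ‖α‖ = ‖v‖⁻¹ := by rw [hα, norm_inv]
    rw [hinv, h5] at h3
    have := congrArg (·⁻¹) h3
    simpa [zpow_neg] using this.symm
  refine ⟨h4, h6, ?_⟩
  by_contra hle
  push_neg at hle
  have h0le : (0:ℤ) ≤ padicValRat p (S.s α) := by omega
  have : (1:ℝ) ≤ (p:ℝ) ^ (padicValRat p (S.s α)) := one_le_zpow₀ hpR.le h0le
  rw [← h6] at this; linarith

end LocalConstancyAux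

/-- Local constancy of the partial quotients: if `(α, β)` has a `p`-adic MCF expansion
of length `≥ n` and `max{|α - α'|_p, |β - β'|_p} < p^{-2K_n}`, then the MCF of
`(α', β')` also has length `≥ n` and the first `n + 1` partial quotients agree.
Here `α = al 0`, `β = be 0`, `α' = al' 0`, `β' = be' 0`; the primed sequences follow
the Jacobi–Perron recursion whenever it is defined. -/
theorem pmcf_local_constancy (p : ℕ) [Fact (Nat.Prime p)] (hp : Odd p)
    (S : BrowkinS p) (n : ℕ)
    (al be al' be' : ℕ → ℚ_[p])
    (hne : ∀ k < n, be k - (S.s (be k) : ℚ_[p]) ≠ 0)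
    (hal : ∀ k < n, al (k + 1) = (be k - (S.s (be k) : ℚ_[p]))⁻¹)
    (hbe : ∀ k < n, be (k + 1) =
      (al k - (S.s (al k) : ℚ_[p])) * (be k - (S.s (be k) : ℚ_[p]))⁻¹)
    (hal' : ∀ k, be' k - (S.s (be' k) : ℚ_[p]) ≠ 0 →
      al' (k + 1) = (be' k - (S.s (be' k) : ℚ_[p]))⁻¹ ∧
      be' (k + 1) = (al' k - (S.s (al' k) : ℚ_[p])) * (be' k - (S.s (be' k) : ℚ_[p]))⁻¹)
    (K : ℤ) (hK : K = -∑ i ∈ Finset.Icc 1 n, padicValRat p (S.s (al i)))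
    (hclose : max ‖al 0 - al' 0‖ ‖be 0 - be' 0‖ < (p : ℝ) ^ (-(2 * K))) :
    (∀ k < n, be' k - (S.s (be' k) : ℚ_[p]) ≠ 0) ∧
      ∀ i ≤ n, S.s (al i) = S.s (al' i) ∧ S.s (be i) = S.s (be' i) := by
  have hpR : (1:ℝ) < (p:ℝ) := by exact_mod_cast (Fact.out : p.Prime).one_lt
  set E : ℕ → ℤ := fun k => -∑ i ∈ Finset.Icc 1 k, padicValRat p (S.s (al i)) with hE
  have hKE : E n = K := by rw [hK]
  have hvfact : ∀ k < n, ‖be k - (S.s (be k) : ℚ_[p])‖ =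
      (p:ℝ) ^ (padicValRat p (S.s (al (k+1)))) ∧ padicValRat p (S.s (al (k+1))) ≤ -1 := by
    intro k hk
    have := my_val S (hne k hk) (S.s_close (be k)) (hal k hk)
    exact ⟨this.2.1, this.2.2⟩
  have hE0 : E 0 = 0 := by simp [hE]
  have hEsucc : ∀ k, E (k+1) = E k - padicValRat p (S.s (al (k+1))) := by
    intro k
    simp only [hE]
    rw [Finset.sum_Icc_succ_top (by omega : 1 ≤ k+1)]
    ring
  have hEmono : ∀ j k, j ≤ k → k ≤ n → E j ≤ E k := by
    intro j k hjk hkn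
    induction k with
    | zero => simp_all
    | succ m ih =>
      rcases Nat.lt_or_ge j (m+1) with h | h
      · have h1 := ih (by omega) (by omega)
        have h2 := (hvfact m (by omega)).2
        rw [hEsucc m]; omega
      · have : j = m + 1 := by omega
        subst this; exact le_rfl
  have main : ∀ k, k ≤ n →
      (∀ j < k, be' j - (S.s (be' j) : ℚ_[p]) ≠ 0) ∧
      (∀ j ≤ k, S.s (al j) = S.s (al' j) ∧ S.s (be j) = S.s (be' j)) ∧
      max ‖al k - al' k‖ ‖be k - be' k‖ < (p:ℝ) ^ (-(2 * (E n - E k))) := by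
    intro k
    induction k with
    | zero =>
      intro _
      have hb0 : max ‖al 0 - al' 0‖ ‖be 0 - be' 0‖ < (p:ℝ) ^ (-(2 * (E n - E 0))) := by
        rw [hE0, sub_zero, hKE]; exact hclose
      have hle1 : (p:ℝ) ^ (-(2 * (E n - E 0))) ≤ 1 := by
        apply zpow_le_one_of_nonpos₀ hpR.le
        have := hEmono 0 n (Nat.zero_le n) le_rfl
        omega
      refine ⟨fun j hj => absurd hj (Nat.not_lt_zero j), ?_, hb0⟩
      intro j hj
      have hj0 : j = 0 := Nat.le_zero.mp hj
      subst hj0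
      have hlt1 : max ‖al 0 - al' 0‖ ‖be 0 - be' 0‖ < 1 := lt_of_lt_of_le hb0 hle1
      exact ⟨my_s_loc S (lt_of_le_of_lt (le_max_left _ _) hlt1),
        my_s_loc S (lt_of_le_of_lt (le_max_right _ _) hlt1)⟩
    | succ k ih =>
      intro hk1
      have hk : k < n := hk1
      obtain ⟨hne', hs, hδ⟩ := ih (le_of_lt hk1)
      obtain ⟨hsa, hsb⟩ := hs k le_rfl
      set v : ℚ_[p] := be k - (S.s (be k) : ℚ_[p]) with hv
      set v' : ℚ_[p] := be' k - (S.s (be' k) : ℚ_[p]) with hv'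
      set D : ℝ := max ‖al k - al' k‖ ‖be k - be' k‖ with hD
      obtain ⟨hvnorm, hwle⟩ := hvfact k hk
      set w : ℤ := padicValRat p (S.s (al (k+1))) with hw
      have hEk1 : E (k+1) = E k - w := hEsucc k
      have hv0 : v ≠ 0 := hne k hk
      have hvpos : 0 < ‖v‖ := norm_pos_iff.mpr hv0
      have hvlt1 : ‖v‖ < 1 := S.s_close (be k)
      have hexp : -(2 * (E n - E k)) ≤ w := by
        have h1 : E (k+1) ≤ E n := hEmono (k+1) n hk1 le_rfl
        omega
      have hδv : D < ‖v‖ := by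
        rw [hvnorm]
        exact lt_of_lt_of_le hδ (zpow_le_zpow_right₀ hpR.le hexp)
      have hvv' : v - v' = be k - be' k := by rw [hv, hv', hsb]; ring
      have hsub : ‖v - v'‖ < ‖v‖ :=
        lt_of_le_of_lt (by rw [hvv']; exact le_max_right _ _) hδv
      have hvn' : ‖v'‖ = ‖v‖ := my_norm_eq_of_sub_lt hsub
      have hv'0 : v' ≠ 0 := by
        intro h; rw [h, norm_zero] at hvn'; exact hvpos.ne' hvn'.symm
      obtain ⟨ha', hb'⟩ := hal' k hv'0
      rw [← hv'] at ha' hb'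
      have halk : al (k+1) = v⁻¹ := hal k hk
      have hbek : be (k+1) = (al k - (S.s (al k) : ℚ_[p])) * v⁻¹ := hbe k hk
      set u : ℚ_[p] := al k - (S.s (al k) : ℚ_[p]) with hu
      have hu' : al' k - (S.s (al' k) : ℚ_[p]) = u + (al' k - al k) := by
        rw [hu, ← hsa]; ring
      have hult1 : ‖u‖ < 1 := S.s_close (al k)
      -- the α component
      have e1 : al (k+1) - al' (k+1) = (v' - v) * (v⁻¹ * v'⁻¹) := by
        rw [halk, ha']
        field_simp
      have hsubD0 : ‖v' - v‖ ≤ D := by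
        rw [norm_sub_rev v' v, hvv']; exact le_max_right _ _
      have n1 : ‖al (k+1) - al' (k+1)‖ ≤ D * (‖v‖⁻¹ * ‖v‖⁻¹) := by
        rw [e1, norm_mul, norm_mul, norm_inv, norm_inv, hvn']
        exact mul_le_mul_of_nonneg_right hsubD0 (by positivity)
      -- the β component
      have e2 : be (k+1) - be' (k+1) =
          (u * (v' - v) + (u - (al' k - (S.s (al' k) : ℚ_[p]))) * v) * (v⁻¹ * v'⁻¹) := by
        rw [hbek, hb']
        field_simp
        ring
      have hDnn : (0:ℝ) ≤ D := le_max_of_le_left (norm_nonneg _)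
      have hsubD : ‖v' - v‖ ≤ D := by
        rw [norm_sub_rev v' v, hvv']; exact le_max_right _ _
      have n2 : ‖be (k+1) - be' (k+1)‖ ≤ D * (‖v‖⁻¹ * ‖v‖⁻¹) := by
        rw [e2, norm_mul, norm_mul, norm_inv, norm_inv, hvn']
        apply mul_le_mul_of_nonneg_right _ (by positivity)
        refine le_trans (Padic.nonarchimedean _ _) (max_le ?_ ?_)
        · rw [norm_mul]
          have h4 := mul_le_mul hult1.le hsubD (norm_nonneg _) zero_le_one
          linarith
        · rw [norm_mul]
          have h3 : ‖u - (al' k - (S.s (al' k) : ℚ_[p]))‖ ≤ D := by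
            have he : u - (al' k - (S.s (al' k) : ℚ_[p])) = al k - al' k := by
              rw [hu']; ring
            rw [he]; exact le_max_left _ _
          have h4 := mul_le_mul h3 hvlt1.le (norm_nonneg _) hDnn
          linarith
      -- combine
      have hc : ‖v‖⁻¹ * ‖v‖⁻¹ = (p:ℝ) ^ (-(2*w)) := by
        rw [hvnorm, ← zpow_neg, ← zpow_add₀ (by positivity : (p:ℝ) ≠ 0)]
        congr 1; ring
      have hcpos : (0:ℝ) < ‖v‖⁻¹ * ‖v‖⁻¹ := by positivity
      have hmax : max ‖al (k+1) - al' (k+1)‖ ‖be (k+1) - be' (k+1)‖ <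
          (p:ℝ) ^ (-(2 * (E n - E (k+1)))) := by
        have hDB : D * (‖v‖⁻¹ * ‖v‖⁻¹) < (p:ℝ) ^ (-(2 * (E n - E (k+1)))) := by
          calc D * (‖v‖⁻¹ * ‖v‖⁻¹)
              < (p:ℝ) ^ (-(2 * (E n - E k))) * (‖v‖⁻¹ * ‖v‖⁻¹) :=
                mul_lt_mul_of_pos_right hδ hcpos
          _ = (p:ℝ) ^ (-(2 * (E n - E (k+1)))) := by
                rw [hc, ← zpow_add₀ (by positivity : (p:ℝ) ≠ 0)]
                congr 1; omega
        exact max_lt (lt_of_le_of_lt n1 hDB) (lt_of_le_of_lt n2 hDB)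
      have hle1 : (p:ℝ) ^ (-(2 * (E n - E (k+1)))) ≤ 1 := by
        apply zpow_le_one_of_nonpos₀ hpR.le
        have := hEmono (k+1) n hk1 le_rfl
        omega
      have hlt1 : max ‖al (k+1) - al' (k+1)‖ ‖be (k+1) - be' (k+1)‖ < 1 :=
        lt_of_lt_of_le hmax hle1
      refine ⟨?_, ?_, hmax⟩
      · intro j hj
        rcases Nat.lt_or_ge j k with h | h
        · exact hne' j h
        · have : j = k := by omega
          subst this
          rw [← hv']
          exact hv'0
      · intro j hj
        rcases Nat.lt_or_ge j (k+1) with h | h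
        · exact hs j (by omega)
        · have : j = k + 1 := by omega
          subst this
          exact ⟨my_s_loc S (lt_of_le_of_lt (le_max_left _ _) hlt1),
            my_s_loc S (lt_of_le_of_lt (le_max_right _ _) hlt1)⟩
  obtain ⟨h1, h2, _⟩ := main n le_rfl
  exact ⟨h1, h2⟩
end

section
/- Let (A_n), (B_n), (C_n) be the convergent numerators/denominators of a p-adic MCF, and let x̃ ∈ (1/2, 1) be the positive root of X³ - (1/2)X² - (1/(2p))X - 1/p³. Then there exists H > 0 such that max{|A_n|_∞, |B_n|_∞, |C_n|_∞} ≤ H (p x̃)^n for all n; in particular max{|A_n|_∞, |B_n|_∞, |C_n|_∞} = o(p^n). -/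
open PMCF in
theorem pmcf_aux (p : ℕ) [Fact (Nat.Prime p)]
    (m : PMCF p) (y : ℝ) (hy1 : 1 ≤ y) (hyp : (p : ℝ) / 2 ≤ y)
    (hp3 : (3 : ℝ) ≤ (p : ℝ))
    (hcube : ((p : ℝ) / 2) * y ^ 2 + ((p : ℝ) / 2) * y + 1 ≤ y ^ 3) :
    ∀ k : ℕ, max (max |((PMCF.A m k : ℚ) : ℝ)| |((PMCF.B m k : ℚ) : ℝ)|)
      |((PMCF.C m k : ℚ) : ℝ)| ≤ ((p : ℝ) / 2) * y ^ k := by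
  have hy0 : (0 : ℝ) < y := by linarith
  have hp2 : (1 : ℝ) ≤ (p : ℝ) / 2 := by linarith
  have ha : ∀ n, |((PMCF.a m n : ℚ) : ℝ)| ≤ (p : ℝ) / 2 := by
    intro n
    have h := (m.s_bound (m.al n)).le
    have h2 : ((|m.s (m.al n)| : ℚ) : ℝ) ≤ (((p : ℚ) / 2 : ℚ) : ℝ) := by exact_mod_cast h
    push_cast at h2
    exact h2
  have hb : ∀ n, |((PMCF.b m n : ℚ) : ℝ)| ≤ (p : ℝ) / 2 := by
    intro n
    have h := (m.s_bound (m.be n)).le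
    have h2 : ((|m.s (m.be n)| : ℚ) : ℝ) ≤ (((p : ℚ) / 2 : ℚ) : ℝ) := by exact_mod_cast h
    push_cast at h2
    exact h2
  intro k
  induction k using Nat.strong_induction_on with
  | _ k ih =>
    match k with
    | 0 => simp [PMCF.A, PMCF.B, PMCF.C]; linarith
    | 1 => simp [PMCF.A, PMCF.B, PMCF.C]; nlinarith
    | 2 =>
      have h1 : ((p:ℝ)/2) * 1 ≤ ((p:ℝ)/2) * y ^ 2 := by nlinarith
      simp only [PMCF.A, PMCF.B, PMCF.C]
      refine max_le (max_le ?_ ?_) ?_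
      · exact le_trans (ha 0) (by nlinarith)
      · exact le_trans (hb 0) (by nlinarith)
      · simp; nlinarith
    | (k + 3) =>
      have h2 := ih (k + 2) (by omega)
      have h1 := ih (k + 1) (by omega)
      have h0 := ih k (by omega)
      have hyk : (0 : ℝ) < y ^ k := pow_pos hy0 k
      have key : ∀ u v w : ℝ,
          |u| ≤ ((p:ℝ)/2) * y ^ (k+2) → |v| ≤ ((p:ℝ)/2) * y ^ (k+1) → |w| ≤ ((p:ℝ)/2) * y ^ k →
          |((PMCF.a m (k+1) : ℚ) : ℝ) * u + ((PMCF.b m (k+1) : ℚ) : ℝ) * v + w|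
            ≤ ((p:ℝ)/2) * y ^ (k + 3) := by
        intro u v w hu hv hw
        have habs : |((PMCF.a m (k+1) : ℚ) : ℝ) * u + ((PMCF.b m (k+1) : ℚ) : ℝ) * v + w|
            ≤ |((PMCF.a m (k+1) : ℚ) : ℝ)| * |u| + |((PMCF.b m (k+1) : ℚ) : ℝ)| * |v| + |w| := by
          calc _ ≤ |((PMCF.a m (k+1) : ℚ) : ℝ) * u + ((PMCF.b m (k+1) : ℚ) : ℝ) * v| + |w| :=
                abs_add_le _ _
            _ ≤ |((PMCF.a m (k+1) : ℚ) : ℝ) * u| + |((PMCF.b m (k+1) : ℚ) : ℝ) * v| + |w| := by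
                have := abs_add_le (((PMCF.a m (k+1) : ℚ) : ℝ) * u) (((PMCF.b m (k+1) : ℚ) : ℝ) * v)
                linarith
            _ = |((PMCF.a m (k+1) : ℚ) : ℝ)| * |u| + |((PMCF.b m (k+1) : ℚ) : ℝ)| * |v| + |w| := by
                rw [abs_mul, abs_mul]
        have hbd1 : |((PMCF.a m (k+1) : ℚ) : ℝ)| * |u| ≤ ((p:ℝ)/2) * (((p:ℝ)/2) * y ^ (k+2)) :=
          mul_le_mul (ha _) hu (abs_nonneg _) (by linarith)
        have hbd2 : |((PMCF.b m (k+1) : ℚ) : ℝ)| * |v| ≤ ((p:ℝ)/2) * (((p:ℝ)/2) * y ^ (k+1)) :=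
          mul_le_mul (hb _) hv (abs_nonneg _) (by linarith)
        have hfin : ((p:ℝ)/2) * (((p:ℝ)/2) * y ^ (k+2)) + ((p:ℝ)/2) * (((p:ℝ)/2) * y ^ (k+1))
            + ((p:ℝ)/2) * y ^ k ≤ ((p:ℝ)/2) * y ^ (k + 3) := by
          have hmul := mul_le_mul_of_nonneg_left hcube
            (show (0:ℝ) ≤ ((p:ℝ)/2) * y ^ k by positivity)
          calc ((p:ℝ)/2) * (((p:ℝ)/2) * y ^ (k+2)) + ((p:ℝ)/2) * (((p:ℝ)/2) * y ^ (k+1))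
              + ((p:ℝ)/2) * y ^ k
              = ((p:ℝ)/2) * y ^ k * (((p:ℝ)/2) * y ^ 2 + ((p:ℝ)/2) * y + 1) := by ring
            _ ≤ ((p:ℝ)/2) * y ^ k * y ^ 3 := hmul
            _ = ((p:ℝ)/2) * y ^ (k + 3) := by ring
        linarith
      have eA : |((PMCF.A m (k+3) : ℚ) : ℝ)| ≤ ((p:ℝ)/2) * y ^ (k + 3) := by
        have : (PMCF.A m (k+3) : ℚ) = PMCF.a m (k+1) * PMCF.A m (k+2)
            + PMCF.b m (k+1) * PMCF.A m (k+1) + PMCF.A m k := rfl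
        rw [this]; push_cast
        exact key _ _ _ (le_trans (le_trans (le_max_left _ _) (le_max_left _ _)) h2)
          (le_trans (le_trans (le_max_left _ _) (le_max_left _ _)) h1)
          (le_trans (le_trans (le_max_left _ _) (le_max_left _ _)) h0)
      have eB : |((PMCF.B m (k+3) : ℚ) : ℝ)| ≤ ((p:ℝ)/2) * y ^ (k + 3) := by
        have : (PMCF.B m (k+3) : ℚ) = PMCF.a m (k+1) * PMCF.B m (k+2)
            + PMCF.b m (k+1) * PMCF.B m (k+1) + PMCF.B m k := rfl
        rw [this]; push_cast
        exact key _ _ _ (le_trans (le_trans (le_max_right _ _) (le_max_left _ _)) h2)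
          (le_trans (le_trans (le_max_right _ _) (le_max_left _ _)) h1)
          (le_trans (le_trans (le_max_right _ _) (le_max_left _ _)) h0)
      have eC : |((PMCF.C m (k+3) : ℚ) : ℝ)| ≤ ((p:ℝ)/2) * y ^ (k + 3) := by
        have : (PMCF.C m (k+3) : ℚ) = PMCF.a m (k+1) * PMCF.C m (k+2)
            + PMCF.b m (k+1) * PMCF.C m (k+1) + PMCF.C m k := rfl
        rw [this]; push_cast
        exact key _ _ _ (le_trans (le_max_right _ _) h2)
          (le_trans (le_max_right _ _) h1)
          (le_trans (le_max_right _ _) h0)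
      exact max_le (max_le eA eB) eC

/-- Euclidean growth of the convergents: with `x̃ ∈ (1/2, 1)` the positive root of
`X³ - (1/2)X² - (1/(2p))X - 1/p³`, there is `H > 0` with
`max{|A_n|_∞, |B_n|_∞, |C_n|_∞} ≤ H (p x̃)^n`; in particular this max is `o(p^n)`. -/
theorem pmcf_euclidean_growth (p : ℕ) [Fact (Nat.Prime p)] (hp : Odd p)
    (m : PMCF p) (xt : ℝ) (hx2 : 1 / 2 < xt) (hx1 : xt < 1)
    (hroot : xt ^ 3 - (1 / 2) * xt ^ 2 - (1 / (2 * (p : ℝ))) * xt - 1 / (p : ℝ) ^ 3 = 0) :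
    (∃ H > (0 : ℝ), ∀ n : ℕ,
        max (max |((PMCF.A m (n + 2) : ℚ) : ℝ)| |((PMCF.B m (n + 2) : ℚ) : ℝ)|)
            |((PMCF.C m (n + 2) : ℚ) : ℝ)| ≤ H * ((p : ℝ) * xt) ^ n) ∧
      (fun n : ℕ =>
          max (max |((PMCF.A m (n + 2) : ℚ) : ℝ)| |((PMCF.B m (n + 2) : ℚ) : ℝ)|)
              |((PMCF.C m (n + 2) : ℚ) : ℝ)|) =o[Filter.atTop]
        fun n : ℕ => (p : ℝ) ^ n := by
  have hp2 : 2 ≤ p := (Fact.out : Nat.Prime p).two_le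
  have hpne2 : p ≠ 2 := by
    rintro rfl
    exact (by decide : ¬ Odd 2) hp
  have hp3n : 3 ≤ p := by omega
  have hp3 : (3 : ℝ) ≤ (p : ℝ) := by exact_mod_cast hp3n
  set y : ℝ := (p : ℝ) * xt with hy
  have hp0 : (0 : ℝ) < (p : ℝ) := by linarith
  have hyp : (p : ℝ) / 2 ≤ y := by nlinarith
  have hy1 : (1 : ℝ) ≤ y := by linarith
  have hylt : y < (p : ℝ) := by nlinarith
  have hcube : ((p : ℝ) / 2) * y ^ 2 + ((p : ℝ) / 2) * y + 1 ≤ y ^ 3 := by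
    have hkey : y ^ 3 - ((p : ℝ) / 2) * y ^ 2 - ((p : ℝ) / 2) * y - 1
        = (p : ℝ) ^ 3 * (xt ^ 3 - (1 / 2) * xt ^ 2 - (1 / (2 * (p : ℝ))) * xt - 1 / (p : ℝ) ^ 3) := by
      rw [hy]; field_simp
    rw [hroot, mul_zero] at hkey
    linarith
  have aux := pmcf_aux p m y hy1 hyp hp3 hcube
  have hbd : ∀ n : ℕ,
      max (max |((PMCF.A m (n + 2) : ℚ) : ℝ)| |((PMCF.B m (n + 2) : ℚ) : ℝ)|)
        |((PMCF.C m (n + 2) : ℚ) : ℝ)| ≤ (((p : ℝ) / 2) * y ^ 2) * y ^ n := by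
    intro n
    calc _ ≤ ((p : ℝ) / 2) * y ^ (n + 2) := aux (n + 2)
      _ = (((p : ℝ) / 2) * y ^ 2) * y ^ n := by ring
  have hnn : ∀ n : ℕ, (0 : ℝ) ≤
      max (max |((PMCF.A m (n + 2) : ℚ) : ℝ)| |((PMCF.B m (n + 2) : ℚ) : ℝ)|)
        |((PMCF.C m (n + 2) : ℚ) : ℝ)| :=
    fun n => le_trans (abs_nonneg _) (le_max_right _ _)
  constructor
  · exact ⟨((p : ℝ) / 2) * y ^ 2, by positivity, hbd⟩
  · have hBigO : (fun n : ℕ =>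
        max (max |((PMCF.A m (n + 2) : ℚ) : ℝ)| |((PMCF.B m (n + 2) : ℚ) : ℝ)|)
          |((PMCF.C m (n + 2) : ℚ) : ℝ)|) =O[Filter.atTop] fun n : ℕ => y ^ n := by
      apply Asymptotics.isBigO_of_le' (c := ((p : ℝ) / 2) * y ^ 2)
      intro n
      rw [Real.norm_eq_abs, Real.norm_eq_abs, abs_of_nonneg (hnn n),
        abs_of_nonneg (by positivity : (0 : ℝ) ≤ y ^ n)]
      exact hbd n
    exact hBigO.trans_isLittleO
      (isLittleO_pow_pow_of_lt_left (by positivity) hylt)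
end
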